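/- arXiv:1301.6058 — 9 statements merged into one kernel-verified Lean document; each statement's English description precedes it below -/
import Mathlib

section
/- Fix b > 0 and positive weights a_1,…,a_T > 0. For every t with 1 ≤ t ≤ T, the identity a_t² · x_tᵀ A_t^{−1} x_t + 1 − a_t = (1 + a_t x_tᵀ A_{t−1}^{−1} x_t − a_t) / (1 + a_t x_tᵀ A_{t−1}^{−1} x_t) holds (the denominator is strictly positive since A_{t−1} is positive definite and a_t > 0). -/
open Matrix Finset

lemma vecMulVec_mulVec' {d : ℕ} (w v u : Fin d → ℝ) :
    vecMulVec w v *ᵥ u = (v ⬝ᵥ u) • w := by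
  ext i
  simp only [vecMulVec, mulVec, dotProduct, Pi.smul_apply, smul_eq_mul, of_apply,
    Finset.sum_mul]
  apply Finset.sum_congr rfl
  intro j _
  ring

lemma sum_mulVec' {d : ℕ} {ι : Type*} (F : Finset ι) (M : ι → Matrix (Fin d) (Fin d) ℝ)
    (v : Fin d → ℝ) : (∑ s ∈ F, M s) *ᵥ v = ∑ s ∈ F, M s *ᵥ v := by
  ext i
  simp only [mulVec, dotProduct, Matrix.sum_apply, Finset.sum_apply, Finset.sum_mul]
  exact Finset.sum_comm

lemma dotProduct_sum' {d : ℕ} {ι : Type*} (F : Finset ι) (v : Fin d → ℝ)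
    (f : ι → (Fin d → ℝ)) : v ⬝ᵥ (∑ s ∈ F, f s) = ∑ s ∈ F, v ⬝ᵥ f s := by
  simp [dotProduct, Finset.mul_sum]
  exact Finset.sum_comm

lemma A_posDef {d : ℕ} (b : ℝ) (hb : 0 < b) (a : ℕ → ℝ)
    (x : ℕ → (Fin d → ℝ))
    (A : ℕ → Matrix (Fin d) (Fin d) ℝ)
    (hA : ∀ t, A t = b • (1 : Matrix (Fin d) (Fin d) ℝ)
        + ∑ s ∈ Icc 1 t, a s • vecMulVec (x s) (x s))
    (t : ℕ) (ha : ∀ s ∈ Icc 1 t, 0 ≤ a s) : (A t).PosDef := by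
  rw [posDef_iff_dotProduct_mulVec]
  constructor
  · show (A t)ᴴ = A t
    rw [hA]
    ext i j
    simp [Matrix.sum_apply, vecMulVec, Matrix.one_apply, mul_comm, eq_comm]
  · intro v hv
    rw [hA]
    simp only [add_mulVec, smul_mulVec, one_mulVec, dotProduct_add,
      dotProduct_smul, sum_mulVec', dotProduct_sum', vecMulVec_mulVec',
      star_trivial]
    have h1 : (0:ℝ) < v ⬝ᵥ v := by
      rcases lt_or_eq_of_le (dotProduct_self_star_nonneg v) with h | h
      · simpa using h
      · exact absurd (dotProduct_self_star_eq_zero.1 (by simpa using h.symm)) hv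
    have h2 : (0:ℝ) ≤ ∑ s ∈ Icc 1 t, a s • ((x s ⬝ᵥ v) • (v ⬝ᵥ x s)) := by
      refine Finset.sum_nonneg fun s hs => ?_
      rw [smul_eq_mul, smul_eq_mul, dotProduct_comm v (x s)]
      exact mul_nonneg (ha s hs) (mul_self_nonneg _)
    have hbv : 0 < b • (v ⬝ᵥ v) := by simpa [smul_eq_mul] using mul_pos hb h1
    exact add_pos_of_pos_of_nonneg hbv h2

/-- `a_t²·x_tᵀA_t⁻¹x_t + 1 − a_t
  = (1 + a_t x_tᵀA_{t−1}⁻¹x_t − a_t)/(1 + a_t x_tᵀA_{t−1}⁻¹x_t)`. -/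
theorem stmt_1 {d T : ℕ} (b : ℝ) (hb : 0 < b)
    (a : ℕ → ℝ) (ha : ∀ s ∈ Icc 1 T, 0 < a s)
    (x : ℕ → (Fin d → ℝ))
    (A : ℕ → Matrix (Fin d) (Fin d) ℝ)
    (hA : ∀ t, A t = b • (1 : Matrix (Fin d) (Fin d) ℝ)
        + ∑ s ∈ Icc 1 t, a s • vecMulVec (x s) (x s))
    (t : ℕ) (ht : t ∈ Icc 1 T) :
    (a t) ^ 2 * (x t ⬝ᵥ ((A t)⁻¹ *ᵥ x t)) + 1 - a t
      = (1 + a t * (x t ⬝ᵥ ((A (t - 1))⁻¹ *ᵥ x t)) - a t)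
        / (1 + a t * (x t ⬝ᵥ ((A (t - 1))⁻¹ *ᵥ x t))) := by
  simp only [mem_Icc] at ht
  obtain ⟨ht1, htT⟩ := ht
  have hnn : ∀ u, u ≤ T → ∀ s ∈ Icc 1 u, (0:ℝ) ≤ a s := fun u hu s hs => by
    simp only [mem_Icc] at hs
    exact (ha s (mem_Icc.2 ⟨hs.1, hs.2.trans hu⟩)).le
  have hpos : ∀ u, u ≤ T → (A u).PosDef := fun u hu =>
    A_posDef b hb a x A hA u (hnn u hu)
  have hPt : (A t).PosDef := hpos t htT
  have hPp : (A (t-1)).PosDef := hpos (t-1) (le_trans (Nat.sub_le t 1) htT)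
  have hat : 0 < a t := ha t (mem_Icc.2 ⟨ht1, htT⟩)
  -- split the sum
  have hsplit : A t = A (t-1) + a t • vecMulVec (x t) (x t) := by
    rw [hA, hA]
    have hset : Icc 1 t = insert t (Icc 1 (t-1)) := by
      ext s
      simp only [mem_Icc, mem_insert]
      omega
    rw [hset, Finset.sum_insert (by simp only [mem_Icc]; omega)]
    abel
  set q : ℝ := x t ⬝ᵥ ((A (t-1))⁻¹ *ᵥ x t) with hq
  -- q ≥ 0
  have hq0 : 0 ≤ q := by
    have := hPp.inv.posSemidef.re_dotProduct_nonneg (x t)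
    simpa [hq] using this
  have hden : (0:ℝ) < 1 + a t * q := by positivity
  -- key: A t *ᵥ (A(t-1)⁻¹ *ᵥ x t) = (1 + a t * q) • x t
  haveI := hPp.isUnit.invertible
  haveI := hPt.isUnit.invertible
  have hkey : A t *ᵥ ((A (t-1))⁻¹ *ᵥ x t) = (1 + a t * q) • x t := by
    rw [hsplit, add_mulVec, mulVec_mulVec, Matrix.mul_inv_of_invertible, one_mulVec,
      smul_mulVec, vecMulVec_mulVec']
    ext i
    simp [hq]
    ring
  have hw : (A (t-1))⁻¹ *ᵥ x t = (1 + a t * q) • ((A t)⁻¹ *ᵥ x t) := by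
    have := congrArg (fun v => (A t)⁻¹ *ᵥ v) hkey
    simpa [mulVec_mulVec, Matrix.inv_mul_of_invertible, one_mulVec, mulVec_smul] using this
  have hp : q = (1 + a t * q) * (x t ⬝ᵥ ((A t)⁻¹ *ᵥ x t)) := by
    calc q = x t ⬝ᵥ ((A (t - 1))⁻¹ *ᵥ x t) := hq
    _ = x t ⬝ᵥ ((1 + a t * q) • ((A t)⁻¹ *ᵥ x t)) := by rw [hw]
    _ = (1 + a t * q) * (x t ⬝ᵥ ((A t)⁻¹ *ᵥ x t)) := by rw [dotProduct_smul, smul_eq_mul]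
  rw [eq_div_iff hden.ne']
  linear_combination (a t)^2 * hp.symm
end

section
/- Fix b > 0, positive weights a_1,…,a_T > 0, inputs x_1,…,x_T ∈ ℝ^d and labels y_1,…,y_{T−1} ∈ ℝ, and assume 1 + a_T x_Tᵀ A_{T−1}^{−1} x_T − a_T ≤ 0. Define the last-step min-max objective G(y, ŷ) = ((1 + a_T x_Tᵀ A_{T−1}^{−1} x_T − a_T)/(1 + a_T x_Tᵀ A_{T−1}^{−1} x_T))·y² + 2y·(a_T b_{T−1}ᵀ A_T^{−1} x_T − ŷ) + ŷ². Then ŷ* = b_{T−1}ᵀ A_{T−1}^{−1} x_T is an optimal prediction: for every ŷ ∈ ℝ, sup_{y ∈ ℝ} G(y, ŷ*) ≤ sup_{y ∈ ℝ} G(y, ŷ) (where the suprema are taken in the extended reals ℝ ∪ {+∞}). -/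
open Matrix Finset

lemma vmv_mulVec {n : ℕ} (w v u : Fin n → ℝ) :
    Matrix.vecMulVec w v *ᵥ u = (v ⬝ᵥ u) • w := by
  funext i
  simp only [Matrix.mulVec, Matrix.vecMulVec_apply, Pi.smul_apply, smul_eq_mul,
    dotProduct]
  rw [Finset.sum_mul]
  exact Finset.sum_congr rfl fun j _ => by ring

lemma psd_smul_vmv {n : ℕ} (c : ℝ) (hc : 0 ≤ c) (w : Fin n → ℝ) :
    (c • Matrix.vecMulVec w w).PosSemidef := by
  refine Matrix.PosSemidef.of_dotProduct_mulVec_nonneg ?_ ?_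
  · ext i j
    simp [Matrix.conjTranspose_apply, Matrix.vecMulVec_apply, mul_comm]
  · intro v
    have : (c • Matrix.vecMulVec w w) *ᵥ v = c • ((w ⬝ᵥ v) • w) := by
      rw [Matrix.smul_mulVec, vmv_mulVec]
    rw [this]
    simp only [star_trivial, dotProduct_smul, smul_eq_mul]
    rw [dotProduct_comm v w]
    exact mul_nonneg hc (mul_self_nonneg _)

lemma scalar_key (r s yT yhat : ℝ) (hr : r ≤ 0) :
    ∃ Y : ℝ, r * yT ^ 2 + 2 * yT * ((1 - r) * s - s) + s ^ 2
      ≤ r * Y ^ 2 + 2 * Y * ((1 - r) * s - yhat) + yhat ^ 2 := by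
  rcases eq_or_lt_of_le hr with h0 | hneg
  · refine ⟨(s + yhat) / 2, ?_⟩
    subst h0
    nlinarith [sq_nonneg (s - yhat)]
  · have hrne : r ≠ 0 := ne_of_lt hneg
    refine ⟨(yhat - (1 - r) * s) / r, ?_⟩
    set Y := (yhat - (1 - r) * s) / r with hYdef
    have hY : yhat = (1 - r) * s + r * Y := by
      rw [hYdef]; field_simp; ring
    rw [hY]
    nlinarith [mul_nonneg (mul_nonneg (neg_nonneg.mpr hr) (by linarith : (0:ℝ) ≤ 1 - r))
        (sq_nonneg (Y - s)),
      mul_nonneg (neg_nonneg.mpr hr) (sq_nonneg (yT - s))]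

/-- under `1 + a_T x_TᵀA_{T−1}⁻¹x_T − a_T ≤ 0`, the prediction
`ŷ* = b_{T−1}ᵀ A_{T−1}⁻¹ x_T` is optimal for the last-step min-max objective `G`:
for every `ŷ`, `sup_y G(y, ŷ*) ≤ sup_y G(y, ŷ)` (suprema in the extended reals). -/
theorem stmt_4 {d T : ℕ} (hT : 1 ≤ T) (b : ℝ) (hb : 0 < b)
    (a : ℕ → ℝ) (ha : ∀ s ∈ Icc 1 T, 0 < a s)
    (x : ℕ → (Fin d → ℝ)) (y : ℕ → ℝ)
    (A : ℕ → Matrix (Fin d) (Fin d) ℝ)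
    (hA : ∀ t, A t = b • (1 : Matrix (Fin d) (Fin d) ℝ)
        + ∑ s ∈ Icc 1 t, a s • vecMulVec (x s) (x s))
    (Bv : ℕ → (Fin d → ℝ))
    (hBv : ∀ t, Bv t = ∑ s ∈ Icc 1 t, (a s * y s) • x s)
    (hcond : 1 + a T * (x T ⬝ᵥ ((A (T - 1))⁻¹ *ᵥ x T)) - a T ≤ 0)
    (G : ℝ → ℝ → ℝ)
    (hG : ∀ yT yhat : ℝ, G yT yhat
        = ((1 + a T * (x T ⬝ᵥ ((A (T - 1))⁻¹ *ᵥ x T)) - a T)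
            / (1 + a T * (x T ⬝ᵥ ((A (T - 1))⁻¹ *ᵥ x T)))) * yT ^ 2
          + 2 * yT * (a T * (Bv (T - 1) ⬝ᵥ ((A T)⁻¹ *ᵥ x T)) - yhat) + yhat ^ 2) :
    ∀ yhat : ℝ,
      (⨆ yT : ℝ, ((G yT (Bv (T - 1) ⬝ᵥ ((A (T - 1))⁻¹ *ᵥ x T)) : ℝ) : EReal))
        ≤ ⨆ yT : ℝ, ((G yT yhat : ℝ) : EReal) := by
  -- positive definiteness of all the A t, t ≤ T
  have hb1 : (b • (1 : Matrix (Fin d) (Fin d) ℝ)).PosDef := by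
    have h1 : b • (1 : Matrix (Fin d) (Fin d) ℝ) = Matrix.diagonal (fun _ => b) := by
      ext i j
      by_cases h : i = j <;> simp [Matrix.one_apply, Matrix.diagonal, h]
    rw [h1]
    exact Matrix.PosDef.diagonal (fun _ => hb)
  have hpsd : ∀ t, t ≤ T → (∑ s ∈ Icc 1 t, a s • vecMulVec (x s) (x s)).PosSemidef := by
    intro t ht
    refine Finset.sum_induction _ _ (fun M N hM hN => hM.add hN) Matrix.PosSemidef.zero ?_
    intro s hs
    have hsT : s ∈ Icc 1 T := by
      simp only [Finset.mem_Icc] at hs ⊢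
      exact ⟨hs.1, le_trans hs.2 ht⟩
    exact psd_smul_vmv _ (ha s hsT).le _
  have hApd : ∀ t, t ≤ T → (A t).PosDef := by
    intro t ht
    rw [hA t]
    exact hb1.add_posSemidef (hpsd t ht)
  have hAT1 : (A (T - 1)).PosDef := hApd _ (Nat.sub_le T 1)
  have hAT : (A T).PosDef := hApd _ le_rfl
  have hdet1 : IsUnit (A (T - 1)).det := (Matrix.isUnit_iff_isUnit_det _).mp hAT1.isUnit
  have hdetT : IsUnit (A T).det := (Matrix.isUnit_iff_isUnit_det _).mp hAT.isUnit
  have haT : 0 < a T := ha T (by simp [hT])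
  -- notation
  set u : Fin d → ℝ := (A (T - 1))⁻¹ *ᵥ x T with hu
  set q : ℝ := x T ⬝ᵥ u with hq
  set c : ℝ := 1 + a T * q with hcdef
  set s : ℝ := Bv (T - 1) ⬝ᵥ u with hsdef
  have hq0 : 0 ≤ q := by
    have := (hAT1.inv.posSemidef).dotProduct_mulVec_nonneg (x T)
    simpa [hq, hu] using this
  have hc : 0 < c := by
    have : 0 ≤ a T * q := mul_nonneg haT.le hq0
    rw [hcdef]; linarith
  -- splitting A T
  have hsplit : A T = A (T - 1) + a T • vecMulVec (x T) (x T) := by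
    obtain ⟨t1, rfl⟩ : ∃ t1, T = t1 + 1 := ⟨T - 1, (Nat.succ_pred_eq_of_pos hT).symm⟩
    have ht1 : t1 + 1 - 1 = t1 := by omega
    rw [hA (t1 + 1), hA (t1 + 1 - 1), ht1,
      Finset.sum_Icc_succ_top (Nat.succ_le_succ (Nat.zero_le t1)), add_assoc]
  -- Sherman–Morrison
  have hATu : A T *ᵥ u = c • x T := by
    rw [hsplit, Matrix.add_mulVec, Matrix.smul_mulVec, vmv_mulVec, hu,
      Matrix.mulVec_mulVec, Matrix.mul_nonsing_inv _ hdet1, Matrix.one_mulVec]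
    rw [← hu, ← hq, hcdef, smul_smul, add_smul, one_smul]
  have hsm : (A T)⁻¹ *ᵥ x T = c⁻¹ • u := by
    have h1 : A T *ᵥ (c⁻¹ • u) = x T := by
      rw [Matrix.mulVec_smul, hATu, smul_smul, inv_mul_cancel₀ hc.ne', one_smul]
    calc (A T)⁻¹ *ᵥ x T = (A T)⁻¹ *ᵥ (A T *ᵥ (c⁻¹ • u)) := by rw [h1]
      _ = ((A T)⁻¹ * A T) *ᵥ (c⁻¹ • u) := by rw [Matrix.mulVec_mulVec]
      _ = c⁻¹ • u := by rw [Matrix.nonsing_inv_mul _ hdetT, Matrix.one_mulVec]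
  -- the middle coefficient identity
  set r : ℝ := (1 + a T * q - a T) / (1 + a T * q) with hrdef
  have hmid : a T * (Bv (T - 1) ⬝ᵥ ((A T)⁻¹ *ᵥ x T)) = (1 - r) * s := by
    rw [hsm, dotProduct_smul, smul_eq_mul, ← hsdef, hrdef]
    rw [hcdef] at hc
    field_simp
    rw [hcdef, mul_div_assoc, div_self hc.ne']; ring
  have hr0 : r ≤ 0 := by
    rw [hrdef]
    apply div_nonpos_of_nonpos_of_nonneg
    · exact hcond
    · rw [hcdef] at hc; linarith
  -- conclude
  intro yhat
  refine iSup_le fun yT => ?_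
  obtain ⟨Y, hle⟩ := scalar_key r s yT yhat hr0
  refine le_iSup_of_le Y ?_
  have : G yT s ≤ G Y yhat := by
    rw [hG, hG, hmid, hrdef]
    exact hle
  exact_mod_cast this
end

section
/- Fix b > 0 and positive weights a_1,…,a_T > 0. For every t with 1 ≤ t ≤ T, with ŷ_t = b_{t−1}ᵀ A_{t−1}^{−1} x_t, the following per-round identity holds: (y_t − ŷ_t)² + inf_{u ∈ ℝ^d} ( b‖u‖² + Σ_{s=1}^{t−1} a_s (y_s − uᵀx_s)² ) − inf_{u ∈ ℝ^d} ( b‖u‖² + Σ_{s=1}^{t} a_s (y_s − uᵀx_s)² ) = ((1 + a_t x_tᵀ A_{t−1}^{−1} x_t − a_t)/(1 + a_t x_tᵀ A_{t−1}^{−1} x_t)) · (y_t − ŷ_t)². -/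
open Matrix Finset

lemma my_vecMulVec_mulVec {d : ℕ} (v w u : Fin d → ℝ) :
    vecMulVec v w *ᵥ u = (w ⬝ᵥ u) • v := by
  ext i
  simp only [mulVec, dotProduct, vecMulVec_apply, Pi.smul_apply, smul_eq_mul, Finset.sum_mul]
  exact Finset.sum_congr rfl fun _ _ => by ring

lemma my_sum_mulVec {d : ℕ} (s : Finset ℕ) (M : ℕ → Matrix (Fin d) (Fin d) ℝ) (u : Fin d → ℝ) :
    (∑ i ∈ s, M i) *ᵥ u = ∑ i ∈ s, (M i *ᵥ u) := by
  ext i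
  simp [mulVec, dotProduct, Finset.sum_apply, Matrix.sum_apply, Finset.sum_mul]
  rw [Finset.sum_comm]

lemma my_sum_dotProduct {d : ℕ} (s : Finset ℕ) (z : ℕ → Fin d → ℝ) (u : Fin d → ℝ) :
    (∑ i ∈ s, z i) ⬝ᵥ u = ∑ i ∈ s, (z i ⬝ᵥ u) := by
  simp [dotProduct, Finset.sum_apply, Finset.sum_mul]
  rw [Finset.sum_comm]

lemma my_dotProduct_sum {d : ℕ} (s : Finset ℕ) (z : ℕ → Fin d → ℝ) (u : Fin d → ℝ) :
    u ⬝ᵥ (∑ i ∈ s, z i) = ∑ i ∈ s, (u ⬝ᵥ z i) := by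
  rw [dotProduct_comm, my_sum_dotProduct]
  exact Finset.sum_congr rfl fun _ _ => dotProduct_comm _ _

lemma my_inf_quad {d : ℕ} (A : Matrix (Fin d) (Fin d) ℝ) (hA : Aᵀ = A)
    (hpos : ∀ w : Fin d → ℝ, 0 ≤ w ⬝ᵥ (A *ᵥ w))
    (c : Fin d → ℝ) (C : ℝ) (u₀ : Fin d → ℝ) (h : A *ᵥ u₀ = c) :
    (⨅ u : Fin d → ℝ, (u ⬝ᵥ (A *ᵥ u) - 2 * (c ⬝ᵥ u) + C)) = C - c ⬝ᵥ u₀ := by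
  have key : ∀ u : Fin d → ℝ, u ⬝ᵥ (A *ᵥ u) - 2 * (c ⬝ᵥ u) + C
      = (u - u₀) ⬝ᵥ (A *ᵥ (u - u₀)) + (C - c ⬝ᵥ u₀) := by
    intro u
    have h1 : u₀ ⬝ᵥ (A *ᵥ u) = c ⬝ᵥ u := by
      rw [dotProduct_mulVec, ← hA, vecMul_transpose, h]
    have h2 : u ⬝ᵥ (A *ᵥ u₀) = c ⬝ᵥ u := by
      rw [h, dotProduct_comm]
    have h3 : u₀ ⬝ᵥ (A *ᵥ u₀) = c ⬝ᵥ u₀ := by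
      rw [h, dotProduct_comm]
    rw [mulVec_sub, dotProduct_sub, sub_dotProduct, sub_dotProduct, h1, h2, h3]
    ring
  have hbdd : BddBelow (Set.range fun u : Fin d → ℝ =>
      u ⬝ᵥ (A *ᵥ u) - 2 * (c ⬝ᵥ u) + C) := by
    refine ⟨C - c ⬝ᵥ u₀, ?_⟩
    rintro _ ⟨u, rfl⟩
    show C - c ⬝ᵥ u₀ ≤ u ⬝ᵥ (A *ᵥ u) - 2 * (c ⬝ᵥ u) + C
    rw [key u]
    have := hpos (u - u₀)
    linarith
  apply le_antisymm
  · calc (⨅ u : Fin d → ℝ, (u ⬝ᵥ (A *ᵥ u) - 2 * (c ⬝ᵥ u) + C))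
        ≤ u₀ ⬝ᵥ (A *ᵥ u₀) - 2 * (c ⬝ᵥ u₀) + C := ciInf_le hbdd u₀
      _ = C - c ⬝ᵥ u₀ := by rw [key u₀]; simp
  · refine le_ciInf fun u => ?_
    show C - c ⬝ᵥ u₀ ≤ u ⬝ᵥ (A *ᵥ u) - 2 * (c ⬝ᵥ u) + C
    calc C - c ⬝ᵥ u₀ ≤ (u - u₀) ⬝ᵥ (A *ᵥ (u - u₀)) + (C - c ⬝ᵥ u₀) := by
          linarith [hpos (u - u₀)]
      _ = u ⬝ᵥ (A *ᵥ u) - 2 * (c ⬝ᵥ u) + C := (key u).symm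

/-- the per-round identity
`(y_t − ŷ_t)² + inf_u (b‖u‖² + L_{t−1}^a(u)) − inf_u (b‖u‖² + L_t^a(u))
   = ((1 + a_t x_tᵀA_{t−1}⁻¹x_t − a_t)/(1 + a_t x_tᵀA_{t−1}⁻¹x_t))·(y_t − ŷ_t)²`,
where `ŷ_t = b_{t−1}ᵀ A_{t−1}⁻¹ x_t`. -/
theorem stmt_5 {d T : ℕ} (b : ℝ) (hb : 0 < b)
    (a : ℕ → ℝ) (ha : ∀ s ∈ Icc 1 T, 0 < a s)
    (x : ℕ → (Fin d → ℝ)) (y : ℕ → ℝ)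
    (A : ℕ → Matrix (Fin d) (Fin d) ℝ)
    (hA : ∀ t, A t = b • (1 : Matrix (Fin d) (Fin d) ℝ)
        + ∑ s ∈ Icc 1 t, a s • vecMulVec (x s) (x s))
    (Bv : ℕ → (Fin d → ℝ))
    (hBv : ∀ t, Bv t = ∑ s ∈ Icc 1 t, (a s * y s) • x s)
    (t : ℕ) (ht : t ∈ Icc 1 T)
    (yhat : ℝ) (hyhat : yhat = Bv (t - 1) ⬝ᵥ ((A (t - 1))⁻¹ *ᵥ x t)) :
    (y t - yhat) ^ 2
      + (⨅ u : Fin d → ℝ,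
          (b * (u ⬝ᵥ u) + ∑ s ∈ Icc 1 (t - 1), a s * (y s - u ⬝ᵥ x s) ^ 2))
      - (⨅ u : Fin d → ℝ,
          (b * (u ⬝ᵥ u) + ∑ s ∈ Icc 1 t, a s * (y s - u ⬝ᵥ x s) ^ 2))
      = ((1 + a t * (x t ⬝ᵥ ((A (t - 1))⁻¹ *ᵥ x t)) - a t)
          / (1 + a t * (x t ⬝ᵥ ((A (t - 1))⁻¹ *ᵥ x t)))) * (y t - yhat) ^ 2 := by
  obtain ⟨ht1, ht2⟩ := mem_Icc.mp ht
  have htt : t - 1 + 1 = t := Nat.succ_pred_eq_of_pos ht1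
  have htT : t - 1 ≤ T := le_trans (Nat.sub_le t 1) ht2
  -- quadratic form
  have hquad : ∀ (n : ℕ) (w : Fin d → ℝ),
      w ⬝ᵥ (A n *ᵥ w) = b * (w ⬝ᵥ w) + ∑ s ∈ Icc 1 n, a s * (w ⬝ᵥ x s) ^ 2 := by
    intro n w
    rw [hA n, add_mulVec, dotProduct_add, smul_mulVec, one_mulVec,
      dotProduct_smul, smul_eq_mul, my_sum_mulVec, my_dotProduct_sum]
    congr 1
    refine Finset.sum_congr rfl fun s _ => ?_
    rw [smul_mulVec, my_vecMulVec_mulVec, dotProduct_smul, dotProduct_smul,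
      smul_eq_mul, smul_eq_mul, dotProduct_comm (x s) w]
    ring
  -- symmetry
  have hsym : ∀ n, (A n)ᵀ = A n := by
    intro n
    rw [hA n, transpose_add, transpose_smul, transpose_one, transpose_sum]
    congr 1
    refine Finset.sum_congr rfl fun s _ => ?_
    rw [transpose_smul]
    congr 1
    ext i j
    simp [vecMulVec_apply, transpose_apply, mul_comm]
  -- positivity of the quadratic form
  have hposq : ∀ n, n ≤ T → ∀ w : Fin d → ℝ, 0 ≤ w ⬝ᵥ (A n *ᵥ w) := by
    intro n hn w
    rw [hquad n w]
    have h1 : 0 ≤ w ⬝ᵥ w := by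
      simpa [dotProduct] using Finset.sum_nonneg fun i _ => mul_self_nonneg (w i)
    have h2 : 0 ≤ ∑ s ∈ Icc 1 n, a s * (w ⬝ᵥ x s) ^ 2 := by
      refine Finset.sum_nonneg fun s hs => ?_
      have hs' : s ∈ Icc 1 T := by
        rw [mem_Icc] at hs ⊢
        exact ⟨hs.1, le_trans hs.2 hn⟩
      exact mul_nonneg (ha s hs').le (sq_nonneg _)
    nlinarith
  -- positive definiteness of A (t-1)
  have hMpos : (A (t - 1)).PosDef := by
    rw [posDef_iff_dotProduct_mulVec]
    constructor
    · show (A (t - 1))ᴴ = A (t - 1)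
      ext i j
      simp only [conjTranspose_apply, star_trivial]
      exact congrFun (congrFun (hsym (t - 1)) i) j
    · intro z hz
      show 0 < (star z) ⬝ᵥ (A (t - 1) *ᵥ z)
      rw [star_trivial, hquad (t - 1) z]
      have hz1 : 0 < z ⬝ᵥ z := by
        obtain ⟨i, hi⟩ := Function.ne_iff.mp hz
        have hi' : z i ≠ 0 := by simpa using hi
        simp only [dotProduct]
        exact Finset.sum_pos' (fun j _ => mul_self_nonneg (z j))
          ⟨i, Finset.mem_univ i, mul_self_pos.mpr hi'⟩
      have h2 : 0 ≤ ∑ s ∈ Icc 1 (t - 1), a s * (z ⬝ᵥ x s) ^ 2 := by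
        refine Finset.sum_nonneg fun s hs => ?_
        have hs' : s ∈ Icc 1 T := by
          rw [mem_Icc] at hs ⊢
          exact ⟨hs.1, le_trans hs.2 htT⟩
        exact mul_nonneg (ha s hs').le (sq_nonneg _)
      nlinarith
  have hMunit : IsUnit (A (t - 1)).det := isUnit_iff_ne_zero.mpr hMpos.det_pos.ne'
  have hMinv : ∀ z, A (t - 1) *ᵥ ((A (t - 1))⁻¹ *ᵥ z) = z := fun z => by
    rw [mulVec_mulVec, Matrix.mul_nonsing_inv _ hMunit, one_mulVec]
  have hMinvsym : ((A (t - 1))⁻¹)ᵀ = (A (t - 1))⁻¹ := by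
    rw [transpose_nonsing_inv, hsym]
  have hswap : ∀ z w : Fin d → ℝ,
      z ⬝ᵥ ((A (t - 1))⁻¹ *ᵥ w) = w ⬝ᵥ ((A (t - 1))⁻¹ *ᵥ z) := by
    intro z w
    rw [dotProduct_mulVec, ← hMinvsym, vecMul_transpose, dotProduct_comm, hMinvsym]
  set α := a t with hαdef
  set β := y t with hβdef
  set v := x t with hvdef
  set p := Bv (t - 1) ⬝ᵥ ((A (t - 1))⁻¹ *ᵥ v) with hpdef
  set r := v ⬝ᵥ ((A (t - 1))⁻¹ *ᵥ v) with hrdef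
  have hα : 0 < α := ha t ht
  have hr0 : 0 ≤ r := by
    have h1 := hposq (t - 1) htT ((A (t - 1))⁻¹ *ᵥ v)
    rw [hMinv v] at h1
    rw [hrdef, dotProduct_comm]
    exact h1
  have hden : (0:ℝ) < 1 + α * r := by nlinarith
  have hdenne : 1 + α * r ≠ 0 := ne_of_gt hden
  -- objective rewrite
  have hobj : ∀ (n : ℕ) (u : Fin d → ℝ),
      b * (u ⬝ᵥ u) + ∑ s ∈ Icc 1 n, a s * (y s - u ⬝ᵥ x s) ^ 2
      = u ⬝ᵥ (A n *ᵥ u) - 2 * (Bv n ⬝ᵥ u) + ∑ s ∈ Icc 1 n, a s * (y s) ^ 2 := by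
    intro n u
    rw [hquad n u, hBv n, my_sum_dotProduct, Finset.mul_sum]
    have hterm : ∀ s ∈ Icc 1 n, a s * (y s - u ⬝ᵥ x s) ^ 2
        = a s * (u ⬝ᵥ x s) ^ 2 - 2 * (((a s * y s) • x s) ⬝ᵥ u) + a s * (y s) ^ 2 := by
      intro s _
      rw [smul_dotProduct, smul_eq_mul, dotProduct_comm (x s) u]
      ring
    rw [Finset.sum_congr rfl hterm, Finset.sum_add_distrib, Finset.sum_sub_distrib]
    ring
  -- recursions at t
  have hAt : A t = A (t - 1) + α • vecMulVec v v := by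
    rw [hA t, hA (t - 1), ← htt,
      Finset.sum_Icc_succ_top (Nat.le_add_left 1 (t - 1)), htt, add_assoc]
  have hBt : Bv t = Bv (t - 1) + (α * β) • v := by
    rw [hBv t, hBv (t - 1), ← htt,
      Finset.sum_Icc_succ_top (Nat.le_add_left 1 (t - 1)), htt]
  have hC : ∑ s ∈ Icc 1 t, a s * (y s) ^ 2
      = (∑ s ∈ Icc 1 (t - 1), a s * (y s) ^ 2) + α * β ^ 2 := by
    rw [← htt, Finset.sum_Icc_succ_top (Nat.le_add_left 1 (t - 1)), htt]
  -- the two infima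
  have hint1 : (⨅ u : Fin d → ℝ,
      (b * (u ⬝ᵥ u) + ∑ s ∈ Icc 1 (t - 1), a s * (y s - u ⬝ᵥ x s) ^ 2))
      = (∑ s ∈ Icc 1 (t - 1), a s * (y s) ^ 2)
        - Bv (t - 1) ⬝ᵥ ((A (t - 1))⁻¹ *ᵥ Bv (t - 1)) := by
    simp only [hobj (t - 1)]
    exact my_inf_quad (A (t - 1)) (hsym _) (hposq _ htT) (Bv (t - 1)) _
      ((A (t - 1))⁻¹ *ᵥ Bv (t - 1)) (hMinv _)
  set k := α * (β - p) / (1 + α * r) with hkdef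
  set u2 := (A (t - 1))⁻¹ *ᵥ Bv (t - 1) + k • ((A (t - 1))⁻¹ *ᵥ v) with hu2def
  have hvu1 : v ⬝ᵥ ((A (t - 1))⁻¹ *ᵥ Bv (t - 1)) = p := hswap v (Bv (t - 1))
  have hAtu2 : A t *ᵥ u2 = Bv t := by
    rw [hAt, hBt, hu2def, add_mulVec, mulVec_add, mulVec_smul, hMinv, hMinv,
      smul_mulVec, my_vecMulVec_mulVec, dotProduct_add, dotProduct_smul,
      hvu1]
    have hk : k + α * (p + k * r) = α * β := by
      rw [hkdef]; field_simp; ring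
    rw [smul_smul, add_assoc, ← add_smul]
    simp only [smul_eq_mul]
    rw [hk]
  have hint2 : (⨅ u : Fin d → ℝ,
      (b * (u ⬝ᵥ u) + ∑ s ∈ Icc 1 t, a s * (y s - u ⬝ᵥ x s) ^ 2))
      = ((∑ s ∈ Icc 1 (t - 1), a s * (y s) ^ 2) + α * β ^ 2) - Bv t ⬝ᵥ u2 := by
    simp only [hobj t]
    rw [my_inf_quad (A t) (hsym t) (hposq t ht2) (Bv t) _ u2 hAtu2, hC]
  have hBtu2 : Bv t ⬝ᵥ u2
      = Bv (t - 1) ⬝ᵥ ((A (t - 1))⁻¹ *ᵥ Bv (t - 1)) + k * p + (α * β * p + α * β * (k * r)) := by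
    rw [hBt, hu2def]
    simp only [add_dotProduct, dotProduct_add, dotProduct_smul, smul_dotProduct,
      smul_eq_mul]
    rw [hvu1, ← hpdef, ← hrdef]
    ring
  rw [hint1, hint2, hBtu2, hyhat, hkdef]
  field_simp
  ring
end

section
/- Assume ‖x_t‖ ≤ 1 for all t = 1,…,T and b > 1, and let the weights be defined self-consistently by a_t = 1/(1 − x_tᵀ A_{t−1}^{−1} x_t) for t = 1,…,T. Then this recursion is well-defined (1 − x_tᵀ A_{t−1}^{−1} x_t ≥ 1 − 1/b > 0 for all t) and 1 ≤ a_t ≤ b/(b−1) for all t = 1,…,T. -/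
open Matrix Finset

lemma psd_smul_vvt {d : ℕ} (a : ℝ) (ha : 0 ≤ a) (x : Fin d → ℝ) :
    (a • vecMulVec x x).PosSemidef := by
  rw [posSemidef_iff_dotProduct_mulVec]
  constructor
  · ext i j
    simp [vecMulVec_apply, mul_comm]
  · intro y
    have : (a • vecMulVec x x) *ᵥ y = (a * (x ⬝ᵥ y)) • x := by
      ext i
      simp only [mulVec, dotProduct, vecMulVec_apply, Matrix.smul_apply, Pi.smul_apply,
        smul_eq_mul, Finset.mul_sum]
      rw [Finset.sum_mul]
      exact Finset.sum_congr rfl fun _ _ => by ring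
    rw [this]
    have hs : star y = y := by simp
    rw [hs, dotProduct_smul]
    have : y ⬝ᵥ x = x ⬝ᵥ y := dotProduct_comm _ _
    rw [smul_eq_mul, this]
    nlinarith [sq_nonneg (x ⬝ᵥ y)]

lemma quad_bound {d : ℕ} {b : ℝ} (hb : 0 < b) {M : Matrix (Fin d) (Fin d) ℝ}
    (hM : M.PosDef) (hMb : (M - b • 1).PosSemidef) {x : Fin d → ℝ} (hx : x ⬝ᵥ x ≤ 1) :
    0 ≤ x ⬝ᵥ (M⁻¹ *ᵥ x) ∧ x ⬝ᵥ (M⁻¹ *ᵥ x) ≤ 1 / b := by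
  set z := M⁻¹ *ᵥ x with hz
  have hMz : M *ᵥ z = x := by
    rw [hz, mulVec_mulVec, Matrix.mul_nonsing_inv _ hM.det_pos.ne'.isUnit, one_mulVec]
  have hinv : M⁻¹.PosSemidef := hM.inv.posSemidef
  have hstar : ∀ y : Fin d → ℝ, star y = y := fun y => by simp
  have h0 : 0 ≤ x ⬝ᵥ z := by
    have := hinv.dotProduct_mulVec_nonneg x
    rwa [hstar] at this
  refine ⟨h0, ?_⟩
  -- PSD of M - b•1 at z
  have h1 : b * (z ⬝ᵥ z) ≤ x ⬝ᵥ z := by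
    have := hMb.dotProduct_mulVec_nonneg z
    rw [hstar, sub_mulVec, dotProduct_sub, smul_mulVec, one_mulVec, dotProduct_smul,
      hMz] at this
    have hc : z ⬝ᵥ x = x ⬝ᵥ z := dotProduct_comm _ _
    rw [hc] at this
    simp only [smul_eq_mul] at this
    linarith
  have h2 : 0 ≤ (x - b • z) ⬝ᵥ (x - b • z) := by
    have := dotProduct_star_self_nonneg (x - b • z)
    rwa [hstar] at this
  have hexp : (x - b • z) ⬝ᵥ (x - b • z)
      = x ⬝ᵥ x - 2 * b * (x ⬝ᵥ z) + b ^ 2 * (z ⬝ᵥ z) := by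
    have hc : z ⬝ᵥ x = x ⬝ᵥ z := dotProduct_comm _ _
    simp [dotProduct_sub, sub_dotProduct, dotProduct_smul, smul_dotProduct, smul_eq_mul, hc]
    ring
  rw [hexp] at h2
  rw [le_div_iff₀ hb]
  nlinarith

/-- with `‖x_t‖ ≤ 1` (i.e. `x_tᵀx_t ≤ 1`), `b > 1` and the
self-consistent weights `a_t = 1/(1 − x_tᵀA_{t−1}⁻¹x_t)`, the recursion is
well-defined: `1 − x_tᵀA_{t−1}⁻¹x_t ≥ 1 − 1/b > 0`, and `1 ≤ a_t ≤ b/(b−1)`. -/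
theorem stmt_7 {d T : ℕ} (b : ℝ) (hb : 1 < b)
    (x : ℕ → (Fin d → ℝ)) (hx : ∀ t ∈ Icc 1 T, x t ⬝ᵥ x t ≤ 1)
    (a : ℕ → ℝ) (A : ℕ → Matrix (Fin d) (Fin d) ℝ)
    (hA0 : A 0 = b • (1 : Matrix (Fin d) (Fin d) ℝ))
    (ha : ∀ t ∈ Icc 1 T, a t = 1 / (1 - x t ⬝ᵥ ((A (t - 1))⁻¹ *ᵥ x t)))
    (hArec : ∀ t ∈ Icc 1 T, A t = A (t - 1) + a t • vecMulVec (x t) (x t)) :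
    (∀ t ∈ Icc 1 T, 1 - 1 / b ≤ 1 - x t ⬝ᵥ ((A (t - 1))⁻¹ *ᵥ x t)) ∧
    (0 < 1 - 1 / b) ∧
    (∀ t ∈ Icc 1 T, 1 ≤ a t ∧ a t ≤ b / (b - 1)) := by
  have hb0 : (0:ℝ) < b := lt_trans one_pos hb
  have hb1 : 0 < 1 - 1 / b := by
    rw [sub_pos, div_lt_one hb0]; exact hb
  -- Main invariant by induction
  have H : ∀ t, t ≤ T → (A t).PosDef ∧ (A t - b • 1).PosSemidef := by
    intro t
    induction t with
    | zero =>
      intro _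
      constructor
      · rw [hA0, smul_one_eq_diagonal]
        exact Matrix.PosDef.diagonal fun _ => hb0
      · rw [hA0, sub_self]
        exact Matrix.PosSemidef.zero
    | succ n ih =>
      intro hn
      have hmem : n + 1 ∈ Icc 1 T := by
        simp only [Finset.mem_Icc]
        omega
      obtain ⟨hPD, hPSD⟩ := ih (by omega)
      have hsimp : (n + 1) - 1 = n := rfl
      have hq := quad_bound hb0 hPD hPSD (hx _ hmem)
      have haval := ha _ hmem
      rw [hsimp] at haval
      set q := x (n+1) ⬝ᵥ ((A n)⁻¹ *ᵥ x (n+1)) with hqdef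
      have hq1 : q ≤ 1 / b := hq.2
      have hq0 : 0 ≤ q := hq.1
      have hpos : 0 < 1 - q := lt_of_lt_of_le hb1 (by linarith)
      have hapos : 0 ≤ a (n+1) := by
        rw [haval]; positivity
      have hrec := hArec _ hmem
      rw [hsimp] at hrec
      constructor
      · rw [hrec]
        exact hPD.add_posSemidef (psd_smul_vvt _ hapos _)
      · rw [hrec, add_sub_right_comm]
        exact hPSD.add (psd_smul_vvt _ hapos _)
  have key : ∀ t ∈ Icc 1 T,
      0 ≤ x t ⬝ᵥ ((A (t-1))⁻¹ *ᵥ x t) ∧ x t ⬝ᵥ ((A (t-1))⁻¹ *ᵥ x t) ≤ 1 / b := by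
    intro t ht
    simp only [Finset.mem_Icc] at ht
    obtain ⟨hPD, hPSD⟩ := H (t-1) (by omega)
    exact quad_bound hb0 hPD hPSD (hx t (by simp [Finset.mem_Icc]; omega))
  refine ⟨fun t ht => by linarith [(key t ht).2], hb1, fun t ht => ?_⟩
  obtain ⟨hq0, hq1⟩ := key t ht
  rw [ha t ht]
  have hpos : 0 < 1 - x t ⬝ᵥ ((A (t-1))⁻¹ *ᵥ x t) := lt_of_lt_of_le hb1 (by linarith)
  constructor
  · rw [le_div_iff₀ hpos]; linarith
  · rw [div_le_div_iff₀ hpos (by linarith : (0:ℝ) < b - 1)]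
    have hbq : (x t ⬝ᵥ ((A (t-1))⁻¹ *ᵥ x t)) * b ≤ 1 := (le_div_iff₀ hb0).1 hq1
    nlinarith
end

section
/- Fix b > 0 and positive weights a_1,…,a_T > 0. Then Σ_{t=1}^T a_t x_tᵀ A_t^{−1} x_t ≤ ln det( (1/b)·A_T ). -/
open Matrix Finset

/-- `a • vecMulVec v v` is positive semidefinite for `0 ≤ a`. -/
lemma aux_psd {d : ℕ} (a : ℝ) (ha : 0 ≤ a) (v : Fin d → ℝ) :
    (a • vecMulVec v v).PosSemidef := by
  have h1 : (vecMulVec v v).PosSemidef := by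
    have := Matrix.posSemidef_conjTranspose_mul_self (Matrix.replicateRow Unit v)
    have heq : (Matrix.replicateRow Unit v)ᴴ * Matrix.replicateRow Unit v = vecMulVec v v := by
      ext i j
      simp [Matrix.mul_apply, Matrix.vecMulVec_apply, Matrix.conjTranspose_apply]
    rwa [heq] at this
  rw [Matrix.posSemidef_iff_dotProduct_mulVec] at h1 ⊢
  constructor
  · unfold Matrix.IsHermitian at *
    rw [Matrix.conjTranspose_smul, h1.1]
    simp
  · intro x
    have := h1.2 x
    rw [Matrix.smul_mulVec, dotProduct_smul]
    exact mul_nonneg ha this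

/-- A finite sum of positive semidefinite matrices is positive semidefinite. -/
lemma aux_psd_sum {d : ℕ} (s : Finset ℕ) (f : ℕ → Matrix (Fin d) (Fin d) ℝ)
    (h : ∀ i ∈ s, (f i).PosSemidef) : (∑ i ∈ s, f i).PosSemidef := by
  classical
  induction s using Finset.induction_on with
  | empty => simpa using (Matrix.PosSemidef.zero (n := Fin d) (R := ℝ))
  | insert u s0 hni ih =>
    rw [Finset.sum_insert hni]
    exact (h u (Finset.mem_insert_self u s0)).add
      (ih fun i hi => h i (Finset.mem_insert_of_mem hi))

/-- The regularized Gram matrix is positive definite. -/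
lemma aux_posdef {d : ℕ} (b : ℝ) (hb : 0 < b) (a : ℕ → ℝ) (x : ℕ → (Fin d → ℝ))
    (t : ℕ) (ha : ∀ s ∈ Icc 1 t, 0 ≤ a s) :
    (b • (1 : Matrix (Fin d) (Fin d) ℝ)
      + ∑ s ∈ Icc 1 t, a s • vecMulVec (x s) (x s)).PosDef := by
  have h1 : (b • (1 : Matrix (Fin d) (Fin d) ℝ)).PosDef := by
    rw [Matrix.posDef_iff_dotProduct_mulVec]
    constructor
    · unfold Matrix.IsHermitian
      simp
    · intro v hv
      have hvv : 0 < dotProduct (star v) v := by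
        simpa using dotProduct_star_self_pos_iff.2 hv
      rw [Matrix.smul_mulVec, Matrix.one_mulVec, dotProduct_smul]
      exact mul_pos hb hvv
  have h2 : (∑ s ∈ Icc 1 t, a s • vecMulVec (x s) (x s)).PosSemidef :=
    aux_psd_sum _ _ fun s hs => aux_psd _ (ha s hs) _
  exact h1.add_posSemidef h2

/-- Key one-step inequality. -/
lemma aux_step {d : ℕ} (M N : Matrix (Fin d) (Fin d) ℝ) (hM : M.PosDef) (hN : N.PosDef)
    (c : ℝ) (v : Fin d → ℝ) (hMN : N = M + c • vecMulVec v v) :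
    c * (v ⬝ᵥ (N⁻¹ *ᵥ v)) ≤ Real.log N.det - Real.log M.det := by
  set q : ℝ := v ⬝ᵥ (N⁻¹ *ᵥ v) with hq
  have hNdet : 0 < N.det := hN.det_pos
  have hMdet : 0 < M.det := hM.det_pos
  -- M = N + (-c) • vecMulVec v v
  have hMeq : M = N + Matrix.replicateCol Unit ((-c) • v) * Matrix.replicateRow Unit v := by
    rw [hMN]
    have : Matrix.replicateCol Unit ((-c) • v) * Matrix.replicateRow Unit v
        = (-c) • vecMulVec v v := by
      rw [Matrix.vecMulVec_eq Unit]
      ext i j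
      simp [Matrix.mul_apply, Matrix.replicateCol_apply, Matrix.replicateRow_apply, mul_assoc]
    rw [this]
    module
  have hdet : M.det = N.det * (1 - c * q) := by
    rw [hMeq, Matrix.det_add_replicateCol_mul_replicateRow (isUnit_iff_ne_zero.2 hNdet.ne') _ _]
    congr 1
    rw [Matrix.det_unique]
    have hx : (Matrix.replicateRow Unit v * N⁻¹ * Matrix.replicateCol Unit ((-c) • v)) default default
        = -c * q := by
      simp only [Matrix.mul_apply, Matrix.replicateRow_apply, Matrix.replicateCol_apply, hq,
        dotProduct, Matrix.mulVec, Finset.univ_unique, Finset.sum_singleton,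
        Pi.smul_apply, smul_eq_mul, Finset.sum_mul, Finset.mul_sum]
      rw [Finset.sum_comm]
      apply Finset.sum_congr rfl
      intro i _
      apply Finset.sum_congr rfl
      intro j _
      ring
    simp only [Matrix.add_apply, Pi.add_apply, hx, Matrix.one_apply_eq]
    ring
  have hr : (0:ℝ) < 1 - c * q := by
    by_contra h
    push_neg at h
    nlinarith
  have hlog : Real.log (1 - c * q) ≤ (1 - c * q) - 1 :=
    Real.log_le_sub_one_of_pos hr
  have hlogM : Real.log M.det = Real.log N.det + Real.log (1 - c * q) := by
    rw [hdet, Real.log_mul hNdet.ne' hr.ne']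
  linarith

/-- `Σ_{t=1}^T a_t x_tᵀ A_t⁻¹ x_t ≤ ln det((1/b)·A_T)`. -/
theorem stmt_8 {d T : ℕ} (b : ℝ) (hb : 0 < b)
    (a : ℕ → ℝ) (ha : ∀ t ∈ Icc 1 T, 0 < a t)
    (x : ℕ → (Fin d → ℝ))
    (A : ℕ → Matrix (Fin d) (Fin d) ℝ)
    (hA : ∀ t, A t = b • (1 : Matrix (Fin d) (Fin d) ℝ)
        + ∑ s ∈ Icc 1 t, a s • vecMulVec (x s) (x s)) :
    ∑ t ∈ Icc 1 T, a t * (x t ⬝ᵥ ((A t)⁻¹ *ᵥ x t))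
      ≤ Real.log (((1 / b) • A T).det) := by
  have hposdef : ∀ t, t ≤ T → (A t).PosDef := by
    intro t ht
    rw [hA t]
    exact aux_posdef b hb a x t (fun s hs => (ha s (Finset.mem_Icc.2
      ⟨(Finset.mem_Icc.1 hs).1, le_trans (Finset.mem_Icc.1 hs).2 ht⟩)).le)
  -- telescoping bound
  have key : ∀ S, S ≤ T → ∑ t ∈ Icc 1 S, a t * (x t ⬝ᵥ ((A t)⁻¹ *ᵥ x t))
      ≤ Real.log (A S).det - Real.log (A 0).det := by
    intro S
    induction S with
    | zero => intro _; simp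
    | succ n ih =>
      intro hn
      rw [Finset.sum_Icc_succ_top (Nat.one_le_iff_ne_zero.2 (Nat.succ_ne_zero n))]
      have step : a (n+1) * (x (n+1) ⬝ᵥ ((A (n+1))⁻¹ *ᵥ x (n+1)))
          ≤ Real.log (A (n+1)).det - Real.log (A n).det := by
        apply aux_step (A n) (A (n+1)) (hposdef n (le_trans (Nat.le_succ n) hn))
          (hposdef (n+1) hn)
        rw [hA (n+1), hA n, Finset.sum_Icc_succ_top (Nat.one_le_iff_ne_zero.2
          (Nat.succ_ne_zero n))]
        abel
      have ihn := ih (le_trans (Nat.le_succ n) hn)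
      linarith
  have hA0 : (A 0).det = b ^ d := by
    rw [hA 0]
    simp [Matrix.det_smul]
  have hATdet : 0 < (A T).det := (hposdef T le_rfl).det_pos
  have hRHS : Real.log (((1 / b) • A T).det)
      = Real.log (A T).det - Real.log (A 0).det := by
    rw [Matrix.det_smul, hA0, Real.log_mul (by positivity) hATdet.ne',
      Real.log_pow, Real.log_pow, one_div, Real.log_inv, Fintype.card_fin]
    ring
  rw [hRHS]
  exact key T le_rfl
end

section
/- Assume ‖x_t‖ ≤ 1 for all t = 1,…,T and b > 1, and let the weights be a_t = 1/(1 − x_tᵀ A_{t−1}^{−1} x_t) for t = 1,…,T. Then for every u ∈ ℝ^d, the weighted loss satisfies L_T^a(u) ≤ L_T(u) + (b/(b−1)) · S · ln det( (1/b)·A_T ), where S = sup_{1 ≤ t ≤ T} (y_t − uᵀx_t)². -/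
open Matrix Finset

lemma aux_dot_vmv {d : ℕ} (x v : Fin d → ℝ) :
    v ⬝ᵥ (vecMulVec x x *ᵥ v) = (x ⬝ᵥ v) ^ 2 := by
  simp only [dotProduct, mulVec, vecMulVec_apply, sq, Finset.mul_sum, Finset.sum_mul]
  rw [Finset.sum_comm]
  exact Finset.sum_congr rfl fun i _ => Finset.sum_congr rfl fun j _ => by ring

lemma aux_vmv_transpose {d : ℕ} (x : Fin d → ℝ) :
    (vecMulVec x x)ᵀ = vecMulVec x x := by
  ext i j; simp [vecMulVec_apply, transpose_apply, mul_comm]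

lemma aux_smul_vmv {d : ℕ} (c : ℝ) (x : Fin d → ℝ) :
    c • vecMulVec x x = vecMulVec (c • x) x := by
  ext i j; simp [vecMulVec_apply, mul_assoc]

lemma aux_det_rank_one {d : ℕ} {M : Matrix (Fin d) (Fin d) ℝ} (hM : IsUnit M.det)
    (c : ℝ) (x : Fin d → ℝ) :
    (M + c • vecMulVec x x).det = M.det * (1 + c * (x ⬝ᵥ (M⁻¹ *ᵥ x))) := by
  have h1 : M * ((1 : Matrix (Fin d) (Fin d) ℝ)
      + replicateCol (Fin 1) (M⁻¹ *ᵥ (c • x)) * replicateRow (Fin 1) x) = M + c • vecMulVec x x := by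
    rw [Matrix.mul_add, Matrix.mul_one, replicateCol_mulVec, ← Matrix.mul_assoc, ← Matrix.mul_assoc,
      Matrix.mul_nonsing_inv _ hM, Matrix.one_mul, aux_smul_vmv, vecMulVec_eq (Fin 1)]; rfl
  rw [← h1, det_mul]; erw [det_one_add_replicateCol_mul_replicateRow]
  congr 1
  rw [Matrix.mulVec_smul, dotProduct_smul, smul_eq_mul]

lemma aux_dot_self_nonneg {d : ℕ} (v : Fin d → ℝ) : 0 ≤ v ⬝ᵥ v := by
  apply Finset.sum_nonneg; intro i _; exact mul_self_nonneg _

lemma aux_inv_quad_le {d : ℕ} {b : ℝ} (hb : 0 < b) {M : Matrix (Fin d) (Fin d) ℝ}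
    (hM : M.PosDef) (hquad : ∀ v, b * (v ⬝ᵥ v) ≤ v ⬝ᵥ (M *ᵥ v)) (x : Fin d → ℝ) :
    x ⬝ᵥ (M⁻¹ *ᵥ x) ≤ (x ⬝ᵥ x) / b := by
  set w := M⁻¹ *ᵥ x with hw
  have hMw : M *ᵥ w = x := by
    rw [hw, Matrix.mulVec_mulVec, Matrix.mul_nonsing_inv _ (isUnit_iff_ne_zero.mpr hM.det_pos.ne'),
      Matrix.one_mulVec]
  have hs : x ⬝ᵥ w = w ⬝ᵥ (M *ᵥ w) := by rw [hMw, dotProduct_comm]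
  have h1 : b * (w ⬝ᵥ w) ≤ x ⬝ᵥ w := hs ▸ hquad w
  have hCS : (x ⬝ᵥ w) ^ 2 ≤ (x ⬝ᵥ x) * (w ⬝ᵥ w) := by
    have := Finset.sum_mul_sq_le_sq_mul_sq Finset.univ x w
    simpa [dotProduct, sq] using this
  have hww : 0 ≤ w ⬝ᵥ w := aux_dot_self_nonneg w
  have hxx : 0 ≤ x ⬝ᵥ x := aux_dot_self_nonneg x
  have hs0 : 0 ≤ x ⬝ᵥ w := le_trans (mul_nonneg hb.le hww) h1
  rw [le_div_iff₀ hb]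
  rcases eq_or_lt_of_le hs0 with h | h
  · rw [← h]; simpa using hxx
  · nlinarith [mul_le_mul_of_nonneg_left hCS hb.le, mul_le_mul_of_nonneg_left h1 hxx, h]

lemma aux_main {d T : ℕ} {b : ℝ} (hb : 1 < b)
    (x : ℕ → (Fin d → ℝ)) (hx : ∀ t ∈ Icc 1 T, x t ⬝ᵥ x t ≤ 1)
    (a : ℕ → ℝ) (A : ℕ → Matrix (Fin d) (Fin d) ℝ)
    (hA0 : A 0 = b • (1 : Matrix (Fin d) (Fin d) ℝ))
    (ha : ∀ t ∈ Icc 1 T, a t = 1 / (1 - x t ⬝ᵥ ((A (t - 1))⁻¹ *ᵥ x t)))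
    (hArec : ∀ t ∈ Icc 1 T, A t = A (t - 1) + a t • vecMulVec (x t) (x t)) :
    ∀ t, t ≤ T → ((A t).IsSymm ∧ ∀ v, b * (v ⬝ᵥ v) ≤ v ⬝ᵥ (A t *ᵥ v)) ∧
      (A t).det = b ^ d * ∏ s ∈ Icc 1 t, a s ∧
      ∀ s ∈ Icc 1 t, 1 ≤ a s ∧ a s - 1 ≤ b / (b - 1) * Real.log (a s) := by
  have hb0 : (0:ℝ) < b := lt_trans one_pos hb
  intro t
  induction t with
  | zero =>
    intro _
    refine ⟨⟨?_, fun v => ?_⟩, ?_, ?_⟩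
    · rw [hA0, Matrix.IsSymm, transpose_smul, transpose_one]
    · rw [hA0, Matrix.smul_mulVec, Matrix.one_mulVec, dotProduct_smul, smul_eq_mul]
    · rw [hA0]; simp [Matrix.det_smul]
    · intro s hs; exact absurd hs (by simp)
  | succ n ih =>
    intro hn
    obtain ⟨⟨hsymm, hquad⟩, hdet, hfacts⟩ := ih (le_trans (Nat.le_succ n) hn)
    have hmem : n + 1 ∈ Icc 1 T := by simp [mem_Icc]; omega
    have hherm : (A n).IsHermitian := by
      rw [Matrix.IsHermitian, conjTranspose_eq_transpose_of_trivial]; exact hsymm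
    have hpd : (A n).PosDef := by
      refine posDef_iff_dotProduct_mulVec.mpr ⟨hherm, fun v hv => ?_⟩
      have hvv : 0 < v ⬝ᵥ v := lt_of_le_of_ne (aux_dot_self_nonneg v)
        fun h => hv (dotProduct_self_eq_zero.mp h.symm)
      have hsv : star v = v := by ext i; exact star_trivial _
      rw [hsv]
      exact lt_of_lt_of_le (mul_pos hb0 hvv) (hquad v)
    set r := x (n+1) ⬝ᵥ ((A n)⁻¹ *ᵥ x (n+1)) with hrdef
    have hr0 : 0 ≤ r := by
      have h := hpd.inv.posSemidef.dotProduct_mulVec_nonneg (x (n+1))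
      have hsv : star (x (n+1)) = x (n+1) := by ext i; exact star_trivial _
      rwa [hsv] at h
    have hr1 : r ≤ 1 / b := by
      refine le_trans (aux_inv_quad_le hb0 hpd hquad (x (n+1))) ?_
      gcongr
      exact hx _ hmem
    have h1r : 0 < 1 - r := by
      have h2 : 1/b < 1 := by rw [div_lt_one hb0]; exact hb
      linarith
    have haval : a (n+1) = 1 / (1 - r) := by
      have h := ha _ hmem
      simpa [Nat.add_sub_cancel] using h
    have ha1 : 1 ≤ a (n+1) := by
      rw [haval, le_div_iff₀ h1r, one_mul]; linarith
    have hab : a (n+1) ≤ b / (b-1) := by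
      rw [haval, div_le_div_iff₀ h1r (by linarith : (0:ℝ) < b - 1)]
      have hcan : b * (1/b) = 1 := by field_simp
      nlinarith [mul_le_mul_of_nonneg_left hr1 hb0.le]
    have hapos : (0:ℝ) < a (n+1) := lt_of_lt_of_le one_pos ha1
    have hlog : a (n+1) - 1 ≤ b/(b-1) * Real.log (a (n+1)) := by
      have hlr : Real.log (1 - r) ≤ -r := by
        have := Real.log_le_sub_one_of_pos h1r; linarith
      have hla : r ≤ Real.log (a (n+1)) := by
        rw [haval, one_div, Real.log_inv]; linarith
      have hminus : a (n+1) - 1 = r * a (n+1) := by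
        rw [haval]; field_simp; ring
      rw [hminus]
      calc r * a (n+1) ≤ r * (b/(b-1)) := mul_le_mul_of_nonneg_left hab hr0
        _ ≤ Real.log (a (n+1)) * (b/(b-1)) := by
            exact mul_le_mul_of_nonneg_right hla
              (div_nonneg (by linarith) (by linarith))
        _ = b/(b-1) * Real.log (a (n+1)) := mul_comm _ _
    refine ⟨⟨?_, fun v => ?_⟩, ?_, ?_⟩
    · rw [hArec _ hmem]
      simp only [Nat.add_sub_cancel]
      rw [Matrix.IsSymm, transpose_add, transpose_smul, aux_vmv_transpose, hsymm]
    · rw [hArec _ hmem]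
      simp only [Nat.add_sub_cancel]
      rw [Matrix.add_mulVec, dotProduct_add, Matrix.smul_mulVec, dotProduct_smul,
        smul_eq_mul, aux_dot_vmv]
      have h2 : (0:ℝ) ≤ a (n+1) * (x (n+1) ⬝ᵥ v)^2 := mul_nonneg hapos.le (sq_nonneg _)
      have := hquad v
      linarith
    · rw [hArec _ hmem]
      simp only [Nat.add_sub_cancel]
      rw [aux_det_rank_one (isUnit_iff_ne_zero.mpr hpd.det_pos.ne') (a (n+1)) (x (n+1))]
      have har : 1 + a (n+1) * r = a (n+1) := by rw [haval]; field_simp; ring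
      rw [← hrdef, har, hdet, Finset.prod_Icc_succ_top (Nat.succ_le_succ (Nat.zero_le n))]
      ring
    · intro s hs
      rcases eq_or_ne s (n+1) with h | h
      · subst h; exact ⟨ha1, hlog⟩
      · refine hfacts s ?_
        simp [mem_Icc] at hs ⊢
        omega

/-- with self-consistent weights, for every `u`,
`L_T^a(u) ≤ L_T(u) + (b/(b−1))·S·ln det((1/b)·A_T)` where
`S = sup_{1≤t≤T} (y_t − uᵀx_t)²`. -/
theorem stmt_9 {d T : ℕ} (b : ℝ) (hb : 1 < b)
    (x : ℕ → (Fin d → ℝ)) (hx : ∀ t ∈ Icc 1 T, x t ⬝ᵥ x t ≤ 1)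
    (y : ℕ → ℝ)
    (a : ℕ → ℝ) (A : ℕ → Matrix (Fin d) (Fin d) ℝ)
    (hA0 : A 0 = b • (1 : Matrix (Fin d) (Fin d) ℝ))
    (ha : ∀ t ∈ Icc 1 T, a t = 1 / (1 - x t ⬝ᵥ ((A (t - 1))⁻¹ *ᵥ x t)))
    (hArec : ∀ t ∈ Icc 1 T, A t = A (t - 1) + a t • vecMulVec (x t) (x t))
    (u : Fin d → ℝ) (S : ℝ)
    (hS : S = sSup ((fun t => (y t - u ⬝ᵥ x t) ^ 2) '' Set.Icc 1 T)) :
    ∑ t ∈ Icc 1 T, a t * (y t - u ⬝ᵥ x t) ^ 2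
      ≤ (∑ t ∈ Icc 1 T, (y t - u ⬝ᵥ x t) ^ 2)
        + b / (b - 1) * S * Real.log (((1 / b) • A T).det) := by
  have hb0 : (0:ℝ) < b := lt_trans one_pos hb
  rcases Nat.eq_zero_or_pos T with hT0 | hT1
  · subst hT0
    have h1 : (1/b) • A 0 = (1 : Matrix (Fin d) (Fin d) ℝ) := by
      rw [hA0, smul_smul, one_div, inv_mul_cancel₀ hb0.ne', one_smul]
    rw [h1, Matrix.det_one, Real.log_one]
    simp
  · obtain ⟨_, hdet, hfacts⟩ := aux_main hb x hx a A hA0 ha hArec T le_rfl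
    have hapos : ∀ s ∈ Icc 1 T, (0:ℝ) < a s := fun s hs =>
      lt_of_lt_of_le one_pos (hfacts s hs).1
    have hdet' : ((1/b) • A T).det = ∏ s ∈ Icc 1 T, a s := by
      rw [Matrix.det_smul, hdet, Fintype.card_fin, ← mul_assoc, ← mul_pow, one_div,
        inv_mul_cancel₀ hb0.ne', one_pow, one_mul]
    have hlogdet : Real.log (((1/b) • A T).det) = ∑ s ∈ Icc 1 T, Real.log (a s) := by
      rw [hdet', Real.log_prod fun s hs => (hapos s hs).ne']
    have hfin : ((fun t => (y t - u ⬝ᵥ x t) ^ 2) '' Set.Icc 1 T).Finite :=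
      (Set.finite_Icc 1 T).image _
    have hSle : ∀ t ∈ Icc 1 T, (y t - u ⬝ᵥ x t) ^ 2 ≤ S := by
      intro t ht
      rw [hS]
      refine le_csSup hfin.bddAbove ⟨t, ?_, rfl⟩
      simpa [Set.mem_Icc] using mem_Icc.mp ht
    have hS0 : 0 ≤ S := le_trans (sq_nonneg _) (hSle 1 (mem_Icc.mpr ⟨le_refl 1, hT1⟩))
    rw [hlogdet]
    have key : ∀ t ∈ Icc 1 T, a t * (y t - u ⬝ᵥ x t) ^ 2
        ≤ (y t - u ⬝ᵥ x t) ^ 2 + b/(b-1) * Real.log (a t) * S := by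
      intro t ht
      obtain ⟨h1, h2⟩ := hfacts t ht
      have hl := hSle t ht
      have hl0 : (0:ℝ) ≤ (y t - u ⬝ᵥ x t) ^ 2 := sq_nonneg _
      nlinarith [mul_le_mul_of_nonneg_left hl (by linarith : (0:ℝ) ≤ a t - 1),
        mul_le_mul_of_nonneg_right h2 hS0]
    calc ∑ t ∈ Icc 1 T, a t * (y t - u ⬝ᵥ x t) ^ 2
        ≤ ∑ t ∈ Icc 1 T, ((y t - u ⬝ᵥ x t) ^ 2 + b/(b-1) * Real.log (a t) * S) :=
          Finset.sum_le_sum key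
      _ = (∑ t ∈ Icc 1 T, (y t - u ⬝ᵥ x t) ^ 2)
          + b / (b - 1) * S * ∑ s ∈ Icc 1 T, Real.log (a s) := by
          rw [Finset.sum_add_distrib]
          congr 1
          rw [← Finset.sum_mul, ← Finset.mul_sum]
          ring
end

section
/- Let ℓ_1,…,ℓ_T ≥ 0 and a_1,…,a_T ≥ 1 be real numbers, let S > 0 satisfy ℓ_t ≤ S for all t, and set T' = ⌈(Σ_{t=1}^T ℓ_t)/S⌉. Let I ⊆ {1,…,T} be a set of indices of the T' largest elements among a_1,…,a_T, i.e. |I| = T' and min_{t ∈ I} a_t ≥ a_τ for every τ ∈ {1,…,T} \ I. Then Σ_{t=1}^T ℓ_t (a_t − 1) ≤ S · Σ_{t ∈ I} (a_t − 1). -/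
open Finset

/-- if `0 ≤ ℓ_t ≤ S`, `a_t ≥ 1`, `T' = ⌈(Σℓ_t)/S⌉` and `I` is a set
of indices of the `T'` largest elements among `a_1,…,a_T`, then
`Σ_{t=1}^T ℓ_t(a_t − 1) ≤ S·Σ_{t∈I}(a_t − 1)`. -/
theorem stmt_10 (T : ℕ) (ℓ a : ℕ → ℝ) (S : ℝ) (hS : 0 < S)
    (hℓ0 : ∀ t ∈ Icc 1 T, 0 ≤ ℓ t) (hℓS : ∀ t ∈ Icc 1 T, ℓ t ≤ S)
    (ha : ∀ t ∈ Icc 1 T, 1 ≤ a t)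
    (I : Finset ℕ) (hI : I ⊆ Icc 1 T)
    (hcard : I.card = ⌈(∑ t ∈ Icc 1 T, ℓ t) / S⌉₊)
    (hmax : ∀ t ∈ I, ∀ τ ∈ Icc 1 T \ I, a τ ≤ a t) :
    ∑ t ∈ Icc 1 T, ℓ t * (a t - 1) ≤ S * ∑ t ∈ I, (a t - 1) := by
  by_cases hne : I.Nonempty
  · -- main case
    set b : ℕ → ℝ := fun t => a t - 1 with hb
    set m : ℝ := I.inf' hne b with hm
    have hm0 : 0 ≤ m := by
      rw [hm, Finset.le_inf'_iff]
      intro t ht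
      have := ha t (hI ht); simp [hb]; linarith
    have hmle : ∀ t ∈ I, m ≤ b t := fun t ht => Finset.inf'_le b ht
    have hsumle : ∑ t ∈ Icc 1 T, ℓ t ≤ S * I.card := by
      have h1 : (∑ t ∈ Icc 1 T, ℓ t) / S ≤ (I.card : ℝ) := by
        rw [hcard]; exact Nat.le_ceil _
      calc ∑ t ∈ Icc 1 T, ℓ t = ((∑ t ∈ Icc 1 T, ℓ t) / S) * S := by
            field_simp
        _ ≤ (I.card : ℝ) * S := by
            exact mul_le_mul_of_nonneg_right h1 hS.le
        _ = S * I.card := by ring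
    have hsplit : ∑ t ∈ Icc 1 T, ℓ t * b t
        = ∑ t ∈ I, ℓ t * b t + ∑ t ∈ Icc 1 T \ I, ℓ t * b t := by
      rw [← Finset.sum_sdiff hI]; ring
    have hD : ∑ t ∈ Icc 1 T \ I, ℓ t * b t ≤ m * ∑ t ∈ Icc 1 T \ I, ℓ t := by
      rw [Finset.mul_sum]
      apply Finset.sum_le_sum
      intro τ hτ
      obtain ⟨t0, ht0⟩ := id hne
      have hτT := Finset.mem_sdiff.mp hτ |>.1
      have hbm : b τ ≤ m := by
        rw [hm, Finset.le_inf'_iff]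
        intro t ht
        have := hmax t ht τ hτ
        simp [hb]; linarith
      have hℓτ := hℓ0 τ hτT
      nlinarith
    have hsplitℓ : ∑ t ∈ Icc 1 T \ I, ℓ t = ∑ t ∈ Icc 1 T, ℓ t - ∑ t ∈ I, ℓ t := by
      rw [← Finset.sum_sdiff hI]; ring
    have hD2 : m * ∑ t ∈ Icc 1 T \ I, ℓ t ≤ m * (S * I.card - ∑ t ∈ I, ℓ t) := by
      apply mul_le_mul_of_nonneg_left _ hm0
      rw [hsplitℓ]; linarith
    have hI2 : m * (S * I.card - ∑ t ∈ I, ℓ t) ≤ ∑ t ∈ I, (S - ℓ t) * b t := by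
      have : m * (S * I.card - ∑ t ∈ I, ℓ t) = ∑ t ∈ I, (S - ℓ t) * m := by
        rw [← Finset.sum_mul, Finset.sum_sub_distrib, Finset.sum_const, nsmul_eq_mul]
        ring
      rw [this]
      apply Finset.sum_le_sum
      intro t ht
      have h1 : ℓ t ≤ S := hℓS t (hI ht)
      have h2 := hmle t ht
      nlinarith
    have hfin : ∑ t ∈ I, (S - ℓ t) * b t = S * ∑ t ∈ I, b t - ∑ t ∈ I, ℓ t * b t := by
      rw [Finset.mul_sum, ← Finset.sum_sub_distrib]
      apply Finset.sum_congr rfl; intro t ht; ring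
    calc ∑ t ∈ Icc 1 T, ℓ t * (a t - 1)
        = ∑ t ∈ I, ℓ t * b t + ∑ t ∈ Icc 1 T \ I, ℓ t * b t := hsplit
      _ ≤ ∑ t ∈ I, ℓ t * b t + (S * ∑ t ∈ I, b t - ∑ t ∈ I, ℓ t * b t) := by
          have := hD.trans (hD2.trans (hI2.trans_eq hfin))
          linarith
      _ = S * ∑ t ∈ I, (a t - 1) := by ring
  · rw [Finset.not_nonempty_iff_eq_empty] at hne
    have hc : ⌈(∑ t ∈ Icc 1 T, ℓ t) / S⌉₊ = 0 := by rw [← hcard, hne]; simp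
    have hle : (∑ t ∈ Icc 1 T, ℓ t) / S ≤ 0 := Nat.ceil_eq_zero.mp hc
    have hsum0 : ∑ t ∈ Icc 1 T, ℓ t ≤ 0 := by
      by_contra h
      push_neg at h
      have := div_pos h hS
      linarith
    have heq : ∀ t ∈ Icc 1 T, ℓ t = 0 := by
      intro t ht
      exact (Finset.sum_eq_zero_iff_of_nonneg hℓ0).mp
        (le_antisymm hsum0 (Finset.sum_nonneg hℓ0)) t ht
    rw [hne]
    simp only [Finset.sum_empty, mul_zero]
    apply le_of_eq
    apply Finset.sum_eq_zero
    intro t ht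
    rw [heq t ht, zero_mul]
end

section
/- Fix b > 0, c > 0, positive weights ã_1,…,ã_T > 0, inputs x_1,…,x_T ∈ ℝ^d, labels y_1,…,y_T ∈ ℝ, and a reference vector ū ∈ ℝ^d. Then the function J(u_1,…,u_T) = b‖ū‖² + c·Σ_{t=1}^T ‖u_t − ū‖² + Σ_{t=1}^T ã_t (y_t − u_tᵀx_t)² is minimized over (u_1,…,u_T) ∈ (ℝ^d)^T at u_t = ū + (c^{−1}/(ã_t^{−1} + c^{−1}‖x_t‖²)) · (y_t − ūᵀx_t) · x_t for t = 1,…,T, and its minimal value equals J_min = b‖ū‖² + Σ_{t=1}^T (1/(ã_t^{−1} + c^{−1}‖x_t‖²)) · (y_t − ūᵀx_t)². -/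
open Matrix Finset

lemma stmt14_keyPoly (a c q s P r : ℝ) (ha : 0 < a) (hc : 0 < c) (hq : 0 ≤ q) (hP : 0 ≤ P)
    (hcs : s ^ 2 ≤ P * q) :
    a * c * r ^ 2 ≤ (c * P + a * (r - s) ^ 2) * (c + a * q) := by
  rcases eq_or_lt_of_le hq with hq0 | hq0
  · have hs : s = 0 := by nlinarith
    subst hs; rw [← hq0]
    nlinarith [mul_nonneg hP (mul_pos hc hc).le]
  · nlinarith [sq_nonneg (c*s + a*q*(s-r)), mul_pos (mul_pos hq0 ha) hc,
      mul_nonneg (sub_nonneg.2 hcs) (mul_pos (mul_pos ha hc) hq0).le,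
      mul_nonneg (sub_nonneg.2 hcs) (mul_pos hc hc).le,
      mul_nonneg (mul_nonneg hP hq) (mul_pos ha hc).le, sq_nonneg (s - r)]

lemma stmt14_keyA (a c q s P r : ℝ) (ha : 0 < a) (hc : 0 < c) (hq : 0 ≤ q) (hP : 0 ≤ P)
    (hcs : s ^ 2 ≤ P * q) :
    (1 / (a⁻¹ + c⁻¹ * q)) * r ^ 2 ≤ c * P + a * (r - s) ^ 2 := by
  have hD : 0 < a⁻¹ + c⁻¹ * q := by positivity
  have hD' : a⁻¹ + c⁻¹ * q = (c + a * q) / (a * c) := by field_simp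
  rw [div_mul_eq_mul_div, one_mul, div_le_iff₀ hD, hD', div_eq_mul_inv, ← mul_assoc,
    ← div_eq_mul_inv, le_div_iff₀ (by positivity)]
  nlinarith [stmt14_keyPoly a c q s P r ha hc hq hP hcs]

lemma stmt14_keyB (a c q r : ℝ) (ha : 0 < a) (hc : 0 < c) (hq : 0 ≤ q) :
    c * ((c⁻¹ / (a⁻¹ + c⁻¹ * q) * r) ^ 2 * q)
      + a * (r - (c⁻¹ / (a⁻¹ + c⁻¹ * q) * r) * q) ^ 2
      = (1 / (a⁻¹ + c⁻¹ * q)) * r ^ 2 := by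
  have hD : a⁻¹ + c⁻¹ * q ≠ 0 := by positivity
  field_simp
  ring

/-- `J(u_1,…,u_T) = b‖ū‖² + c·Σ‖u_t − ū‖² + Σ ã_t (y_t − u_tᵀx_t)²`
is minimized at `u_t = ū + (c⁻¹/(ã_t⁻¹ + c⁻¹‖x_t‖²))(y_t − ūᵀx_t)x_t` and its
minimal value is `b‖ū‖² + Σ (1/(ã_t⁻¹ + c⁻¹‖x_t‖²))(y_t − ūᵀx_t)²`. -/
theorem stmt_14 {d T : ℕ} (b c : ℝ) (hb : 0 < b) (hc : 0 < c)
    (atil : ℕ → ℝ) (hatil : ∀ t ∈ Icc 1 T, 0 < atil t)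
    (x : ℕ → (Fin d → ℝ)) (y : ℕ → ℝ) (ubar : Fin d → ℝ)
    (J : (ℕ → Fin d → ℝ) → ℝ)
    (hJ : ∀ u, J u = b * (ubar ⬝ᵥ ubar)
        + c * ∑ t ∈ Icc 1 T, ((u t - ubar) ⬝ᵥ (u t - ubar))
        + ∑ t ∈ Icc 1 T, atil t * (y t - u t ⬝ᵥ x t) ^ 2)
    (uopt : ℕ → Fin d → ℝ)
    (huopt : ∀ t ∈ Icc 1 T, uopt t = ubar
        + (c⁻¹ / ((atil t)⁻¹ + c⁻¹ * (x t ⬝ᵥ x t)) * (y t - ubar ⬝ᵥ x t)) • x t) :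
    (∀ u : ℕ → Fin d → ℝ, J uopt ≤ J u) ∧
    J uopt = b * (ubar ⬝ᵥ ubar)
        + ∑ t ∈ Icc 1 T,
            (1 / ((atil t)⁻¹ + c⁻¹ * (x t ⬝ᵥ x t))) * (y t - ubar ⬝ᵥ x t) ^ 2 := by
  -- reformulate J as a single sum
  have hJ' : ∀ u : ℕ → Fin d → ℝ, J u = b * (ubar ⬝ᵥ ubar)
      + ∑ t ∈ Icc 1 T, (c * ((u t - ubar) ⬝ᵥ (u t - ubar))
          + atil t * (y t - u t ⬝ᵥ x t) ^ 2) := by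
    intro u
    rw [hJ u, Finset.mul_sum, add_assoc, ← Finset.sum_add_distrib]
  have hq : ∀ t : ℕ, 0 ≤ x t ⬝ᵥ x t := fun t =>
    Finset.sum_nonneg fun i _ => mul_self_nonneg _
  -- value at uopt
  have hval : ∀ t ∈ Icc 1 T,
      c * ((uopt t - ubar) ⬝ᵥ (uopt t - ubar)) + atil t * (y t - uopt t ⬝ᵥ x t) ^ 2
        = (1 / ((atil t)⁻¹ + c⁻¹ * (x t ⬝ᵥ x t))) * (y t - ubar ⬝ᵥ x t) ^ 2 := by
    intro t ht
    set a := atil t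
    set q := x t ⬝ᵥ x t with hqdef
    set r := y t - ubar ⬝ᵥ x t with hrdef
    set k := c⁻¹ / (a⁻¹ + c⁻¹ * q) * r with hkdef
    have h1 : uopt t - ubar = k • x t := by rw [huopt t ht]; abel
    have h2 : (uopt t - ubar) ⬝ᵥ (uopt t - ubar) = k ^ 2 * q := by
      rw [h1, smul_dotProduct, dotProduct_smul, smul_eq_mul, smul_eq_mul, ← hqdef]; ring
    have h3 : uopt t ⬝ᵥ x t = ubar ⬝ᵥ x t + k * q := by
      rw [huopt t ht, add_dotProduct, smul_dotProduct, smul_eq_mul, ← hqdef, ← hkdef]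
    have h4 : y t - uopt t ⬝ᵥ x t = r - k * q := by rw [h3, hrdef]; ring
    rw [h2, h4]
    exact stmt14_keyB a c q r (hatil t ht) hc (hq t)
  -- lower bound at any u
  have hlow : ∀ (u : ℕ → Fin d → ℝ), ∀ t ∈ Icc 1 T,
      (1 / ((atil t)⁻¹ + c⁻¹ * (x t ⬝ᵥ x t))) * (y t - ubar ⬝ᵥ x t) ^ 2
        ≤ c * ((u t - ubar) ⬝ᵥ (u t - ubar)) + atil t * (y t - u t ⬝ᵥ x t) ^ 2 := by
    intro u t ht
    have hP : 0 ≤ (u t - ubar) ⬝ᵥ (u t - ubar) :=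
      Finset.sum_nonneg fun i _ => mul_self_nonneg _
    have hcs : ((u t - ubar) ⬝ᵥ x t) ^ 2
        ≤ ((u t - ubar) ⬝ᵥ (u t - ubar)) * (x t ⬝ᵥ x t) := by
      simpa [dotProduct, sq] using
        Finset.sum_mul_sq_le_sq_mul_sq Finset.univ (u t - ubar) (x t)
    have h4 : y t - u t ⬝ᵥ x t
        = (y t - ubar ⬝ᵥ x t) - (u t - ubar) ⬝ᵥ x t := by
      rw [sub_dotProduct]; ring
    rw [h4]
    exact stmt14_keyA (atil t) c (x t ⬝ᵥ x t) ((u t - ubar) ⬝ᵥ x t) _ _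
      (hatil t ht) hc (hq t) hP hcs
  constructor
  · intro u
    rw [hJ' uopt, hJ' u]
    refine add_le_add le_rfl (Finset.sum_le_sum fun t ht => ?_)
    rw [hval t ht]
    exact hlow u t ht
  · rw [hJ' uopt]
    exact congrArg _ (Finset.sum_congr rfl hval)
end

section
/- Assume ‖x_t‖ ≤ 1 for all t = 1,…,T, b > 1, c > 0 with 1/b + 1/c < 1, and let a_t = 1/(1 − x_tᵀ A_{t−1}^{−1} x_t) and ã_t = 1/(1 − x_tᵀ A_{t−1}^{−1} x_t − c^{−1}‖x_t‖²). Then for every T-tuple (u_1,…,u_T) ∈ (ℝ^d)^T: Σ_{t=1}^T ã_t (y_t − u_tᵀx_t)² ≤ Σ_{t=1}^T (y_t − u_tᵀx_t)² + (b/(b−1)) · S · ln det((1/b)·A_T) + T·S / ( c(1 − b^{−1})² − (1 − b^{−1}) ), where S = sup_{1 ≤ t ≤ T} (y_t − u_tᵀx_t)². -/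
open Matrix Finset


private lemma log_aux17 {b z : ℝ} (hb : 1 < b) (hz0 : 0 ≤ z) (hz1 : z ≤ 1 / (b - 1)) :
    z ≤ b / (b - 1) * Real.log (1 + z) := by
  have hb1 : (0:ℝ) < b - 1 := by linarith
  have hb0 : (0:ℝ) < b := by linarith
  set m : ℝ := 1 / (b - 1) with hm
  have hm0 : 0 < m := by positivity
  have h1m : (0:ℝ) < 1 + m := by linarith
  have hmne : m ≠ 0 := hm0.ne'
  have hconc := (strictConcaveOn_log_Ioi.concaveOn).2 (Set.mem_Ioi.2 one_pos)
      (Set.mem_Ioi.2 h1m)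
      (show (0:ℝ) ≤ 1 - z / m by
        have : z / m ≤ 1 := by rw [div_le_one hm0]; exact hz1
        linarith)
      (show (0:ℝ) ≤ z / m by positivity)
      (show (1 - z / m) + z / m = 1 by ring)
  have harg : (1 - z / m) • (1:ℝ) + (z / m) • (1 + m) = 1 + z := by
    have hzm' : z / m * m = z := div_mul_cancel₀ z hmne
    simp only [smul_eq_mul]
    linear_combination hzm'
  rw [harg, Real.log_one, smul_eq_mul, smul_eq_mul, mul_zero, zero_add] at hconc
  -- hconc : z / m * Real.log (1 + m) ≤ Real.log (1 + z)
  have hlogm : 1 / b ≤ Real.log (1 + m) := by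
    have h := Real.one_sub_inv_le_log_of_pos h1m
    have he : 1 - (1 + m)⁻¹ = 1 / b := by
      rw [hm]
      rw [show (1:ℝ) + 1 / (b-1) = b / (b-1) by field_simp; ring]
      field_simp
      ring
    linarith [he ▸ h]
  have hzm : 0 ≤ z / m := by positivity
  have hkey : z / m * (1 / b) ≤ Real.log (1 + z) :=
    le_trans (mul_le_mul_of_nonneg_left hlogm hzm) hconc
  have h2 := mul_le_mul_of_nonneg_left hkey (show (0:ℝ) ≤ b / (b-1) by positivity)
  calc z = b / (b - 1) * (z / m * (1 / b)) := by
        rw [hm]; field_simp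
    _ ≤ b / (b - 1) * Real.log (1 + z) := h2

private lemma vmv_psd17 {d : ℕ} {a : ℝ} (ha : 0 ≤ a) (x : Fin d → ℝ) :
    (a • vecMulVec x x).PosSemidef := by
  refine Matrix.PosSemidef.of_dotProduct_mulVec_nonneg ?_ ?_
  · ext i j
    simp [Matrix.conjTranspose_apply, Matrix.vecMulVec_apply, mul_comm]
  · intro z
    have hmv : vecMulVec x x *ᵥ z = (x ⬝ᵥ z) • x := by
      ext i
      simp [Matrix.mulVec, Matrix.vecMulVec_apply, dotProduct, Finset.mul_sum, mul_comm, mul_left_comm, mul_assoc]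
    rw [smul_mulVec, hmv]
    have : star z ⬝ᵥ (a • ((x ⬝ᵥ z) • x)) = a * ((x ⬝ᵥ z) * (z ⬝ᵥ x)) := by
      simp [dotProduct_smul, mul_comm, mul_assoc]
    rw [this, dotProduct_comm z x]
    exact mul_nonneg ha (mul_self_nonneg _)

private lemma smul_one_posDef17 {d : ℕ} {b : ℝ} (hb : 0 < b) :
    (b • (1 : Matrix (Fin d) (Fin d) ℝ)).PosDef := by
  rw [Matrix.smul_one_eq_diagonal]
  exact Matrix.PosDef.diagonal fun _ => hb

private lemma quad_aux17 {d : ℕ} {b : ℝ} (hb : 0 < b) {M : Matrix (Fin d) (Fin d) ℝ}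
    (hM : M.PosDef) (hMb : (M - b • (1 : Matrix (Fin d) (Fin d) ℝ)).PosSemidef)
    (x : Fin d → ℝ) :
    0 ≤ x ⬝ᵥ (M⁻¹ *ᵥ x) ∧ b * (x ⬝ᵥ (M⁻¹ *ᵥ x)) ≤ x ⬝ᵥ x := by
  set y := M⁻¹ *ᵥ x with hy
  have hq0 : 0 ≤ x ⬝ᵥ y := by simpa using hM.inv.posSemidef.dotProduct_mulVec_nonneg x
  have hMy : M *ᵥ y = x := by
    rw [hy, Matrix.mulVec_mulVec,
      Matrix.mul_nonsing_inv _ (isUnit_iff_ne_zero.2 hM.det_pos.ne'), Matrix.one_mulVec]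
  have hsub := hMb.dotProduct_mulVec_nonneg y
  simp only [Matrix.sub_mulVec, Matrix.smul_mulVec, Matrix.one_mulVec, dotProduct_sub,
    dotProduct_smul, smul_eq_mul, star_trivial, hMy] at hsub
  have h1 : b * (y ⬝ᵥ y) ≤ x ⬝ᵥ y := by
    rw [dotProduct_comm y x] at hsub
    linarith
  have hcs : (x ⬝ᵥ y) ^ 2 ≤ (x ⬝ᵥ x) * (y ⬝ᵥ y) := by
    have := Finset.sum_mul_sq_le_sq_mul_sq Finset.univ x y
    simpa [dotProduct, sq] using this
  have hxx : 0 ≤ x ⬝ᵥ x := Finset.sum_nonneg fun i _ => mul_self_nonneg _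
  refine ⟨hq0, ?_⟩
  rcases hq0.eq_or_lt with h | h
  · rw [← h, mul_zero]; exact hxx
  · nlinarith [mul_le_mul_of_nonneg_left hcs hb.le, mul_le_mul_of_nonneg_left h1 hxx, h]

/-- for every `T`-tuple `(u_1,…,u_T)`,
`L_T^ã(u_1,…,u_T) ≤ L_T(u_1,…,u_T) + (b/(b−1))·S·ln det((1/b)·A_T)
  + T·S/(c(1 − b⁻¹)² − (1 − b⁻¹))` with `S = sup_{1≤t≤T} (y_t − u_tᵀx_t)²`. -/
theorem stmt_17 {d T : ℕ} (b c : ℝ) (hb : 1 < b) (hc : 0 < c)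
    (hbc : 1 / b + 1 / c < 1)
    (x : ℕ → (Fin d → ℝ)) (hx : ∀ t ∈ Icc 1 T, x t ⬝ᵥ x t ≤ 1)
    (y : ℕ → ℝ)
    (a atil : ℕ → ℝ) (A : ℕ → Matrix (Fin d) (Fin d) ℝ)
    (hA0 : A 0 = b • (1 : Matrix (Fin d) (Fin d) ℝ))
    (ha : ∀ t ∈ Icc 1 T, a t = 1 / (1 - x t ⬝ᵥ ((A (t - 1))⁻¹ *ᵥ x t)))
    (hArec : ∀ t ∈ Icc 1 T, A t = A (t - 1) + a t • vecMulVec (x t) (x t))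
    (hatil : ∀ t ∈ Icc 1 T,
      atil t = 1 / (1 - x t ⬝ᵥ ((A (t - 1))⁻¹ *ᵥ x t) - c⁻¹ * (x t ⬝ᵥ x t))) :
    ∀ (u : ℕ → Fin d → ℝ) (S : ℝ),
      S = sSup ((fun t => (y t - u t ⬝ᵥ x t) ^ 2) '' Set.Icc 1 T) →
      ∑ t ∈ Icc 1 T, atil t * (y t - u t ⬝ᵥ x t) ^ 2
        ≤ (∑ t ∈ Icc 1 T, (y t - u t ⬝ᵥ x t) ^ 2)
          + b / (b - 1) * S * Real.log (((1 / b) • A T).det)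
          + (T : ℝ) * S / (c * (1 - b⁻¹) ^ 2 - (1 - b⁻¹)) := by
  intro u S hS
  have hb0 : (0:ℝ) < b := by linarith
  have hb1 : (0:ℝ) < b - 1 := by linarith
  have hcinv : (0:ℝ) < 1 / c := by positivity
  have hD0 : (0:ℝ) < 1 - 1/b - 1/c := by linarith
  have hDb : (0:ℝ) < 1 - 1/b := by
    have : 0 < 1/c := hcinv
    linarith
  -- positive definiteness invariant
  have hinv : ∀ t, t ≤ T →
      (A t).PosDef ∧ ((A t) - b • (1 : Matrix (Fin d) (Fin d) ℝ)).PosSemidef := by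
    intro t
    induction t with
    | zero =>
      intro _
      rw [hA0]
      refine ⟨smul_one_posDef17 hb0, ?_⟩
      rw [sub_self]
      exact Matrix.PosSemidef.zero
    | succ n ih =>
      intro hn
      obtain ⟨hPD, hPSD⟩ := ih (le_trans (Nat.le_succ n) hn)
      have hmem : n + 1 ∈ Icc 1 T := mem_Icc.2 ⟨by omega, hn⟩
      have hquad := quad_aux17 hb0 hPD hPSD (x (n+1))
      have hxn := hx _ hmem
      have hbq : b * (x (n+1) ⬝ᵥ ((A n)⁻¹ *ᵥ x (n+1))) < b :=
        lt_of_le_of_lt (le_trans hquad.2 hxn) hb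
      have hrlt : x (n+1) ⬝ᵥ ((A n)⁻¹ *ᵥ x (n+1)) < 1 :=
        lt_of_mul_lt_mul_left (by linarith) hb0.le
      have hrec := hArec _ hmem
      rw [Nat.add_sub_cancel] at hrec
      have hav := ha _ hmem
      rw [Nat.add_sub_cancel] at hav
      have hapos : 0 ≤ a (n+1) := by
        rw [hav]
        exact le_of_lt (div_pos one_pos (by linarith))
      refine ⟨?_, ?_⟩
      · rw [hrec]
        exact hPD.add_posSemidef (vmv_psd17 hapos _)
      · rw [hrec, show A n + a (n+1) • vecMulVec (x (n+1)) (x (n+1))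
            - b • (1 : Matrix (Fin d) (Fin d) ℝ)
            = (A n - b • (1 : Matrix (Fin d) (Fin d) ℝ))
              + a (n+1) • vecMulVec (x (n+1)) (x (n+1)) from by abel]
        exact hPSD.add (vmv_psd17 hapos _)
  set r : ℕ → ℝ := fun t => x t ⬝ᵥ ((A (t - 1))⁻¹ *ᵥ x t) with hrdef
  have hstep : ∀ t ∈ Icc 1 T, 0 ≤ r t ∧ b * r t ≤ x t ⬝ᵥ x t := by
    intro t ht
    have h2 := (mem_Icc.1 ht).2
    have hI := hinv (t-1) (by omega)
    exact quad_aux17 hb0 hI.1 hI.2 (x t)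
  have ha' : ∀ t ∈ Icc 1 T, a t = 1 / (1 - r t) := ha
  have hatil' : ∀ t ∈ Icc 1 T, atil t = 1 / (1 - r t - c⁻¹ * (x t ⬝ᵥ x t)) := hatil
  -- determinant recursion
  have hdet : ∀ t ∈ Icc 1 T, (A t).det = (A (t-1)).det * (1 + a t * r t) := by
    intro t ht
    have hPD := (hinv (t-1) (by have := (mem_Icc.1 ht).2; omega)).1
    have hU : IsUnit (A (t-1)).det := isUnit_iff_ne_zero.2 hPD.det_pos.ne'
    have hsp : a t • vecMulVec (x t) (x t)
        = replicateCol Unit (a t • x t) * replicateRow Unit (x t) := by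
      rw [vecMulVec_eq Unit, Matrix.replicateCol_smul, Matrix.smul_mul]
    rw [hArec t ht, hsp, det_add_replicateCol_mul_replicateRow hU, Matrix.mul_assoc, ← Matrix.replicateCol_mulVec]
    congr 1
    rw [det_unique]
    simp [Matrix.replicateRow_mul_replicateCol_apply, Matrix.mulVec_smul, dotProduct_smul]
    exact Or.inl rfl
  have hdetprod : ∀ t, t ≤ T → (A t).det = b ^ d * ∏ s ∈ Icc 1 t, (1 + a s * r s) := by
    intro t
    induction t with
    | zero =>
      intro _
      rw [hA0]
      simp [Matrix.det_smul]
    | succ n ih =>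
      intro hn
      have hmem : n + 1 ∈ Icc 1 T := mem_Icc.2 ⟨by omega, hn⟩
      have hd := hdet _ hmem
      rw [Nat.add_sub_cancel] at hd
      rw [hd, ih (by omega), Finset.prod_Icc_succ_top (by omega : 1 ≤ n + 1)]
      ring
  have hKden' : (0:ℝ) < c * (1 - 1/b)^2 - (1 - 1/b) := by
    have hcc : c * (1/c) = 1 := mul_one_div_cancel hc.ne'
    nlinarith [mul_pos hc hD0, hDb, mul_pos hDb (mul_pos hc hD0)]
  have hKden : (0:ℝ) < c * (1 - b⁻¹)^2 - (1 - b⁻¹) := by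
    rw [show (1:ℝ) - b⁻¹ = 1 - 1/b by rw [one_div]]
    exact hKden'
  -- key per-step bounds
  have hmain : ∀ t ∈ Icc 1 T, 0 ≤ atil t - 1 ∧
      atil t - 1 ≤ b/(b-1) * Real.log (1 + a t * r t)
        + 1/(c * (1 - b⁻¹)^2 - (1 - b⁻¹)) ∧
      0 < 1 + a t * r t := by
    intro t ht
    obtain ⟨hr0, hrb⟩ := hstep t ht
    have hxt1 := hx t ht
    have hxt0 : 0 ≤ x t ⬝ᵥ x t := Finset.sum_nonneg fun i _ => mul_self_nonneg _
    have hrub : r t ≤ 1/b := by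
      rw [le_div_iff₀ hb0]
      nlinarith
    have hDq : 0 < 1 - r t := by linarith
    have hcn : c⁻¹ * (x t ⬝ᵥ x t) ≤ 1/c := by
      rw [one_div]
      nlinarith [inv_pos.2 hc]
    have hcn0 : 0 ≤ c⁻¹ * (x t ⬝ᵥ x t) := by positivity
    have hDa : 0 < 1 - r t - c⁻¹ * (x t ⬝ᵥ x t) := by linarith
    have hav := ha' t ht
    have hatv := hatil' t ht
    have haq : a t * r t = r t / (1 - r t) := by rw [hav]; ring
    have haq0 : 0 ≤ a t * r t := by rw [haq]; positivity
    have haqub : a t * r t ≤ 1/(b-1) := by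
      rw [haq, div_le_div_iff₀ hDq hb1]
      nlinarith
    have hlog := log_aux17 hb haq0 haqub
    have ha1 : a t - 1 = a t * r t := by
      rw [hav]
      field_simp [hDq.ne']
      ring
    have hta : atil t - a t ≤ 1/(c * (1 - b⁻¹)^2 - (1 - b⁻¹)) := by
      rw [hatv, hav]
      have he : 1/(1 - r t - c⁻¹ * (x t ⬝ᵥ x t)) - 1/(1 - r t)
          = (c⁻¹ * (x t ⬝ᵥ x t)) / ((1 - r t - c⁻¹ * (x t ⬝ᵥ x t)) * (1 - r t)) := by
        rw [div_sub_div _ _ hDa.ne' hDq.ne']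
        congr 1
        ring
      rw [he]
      have hle : (c⁻¹ * (x t ⬝ᵥ x t)) / ((1 - r t - c⁻¹ * (x t ⬝ᵥ x t)) * (1 - r t))
          ≤ (1/c) / ((1 - 1/b - 1/c) * (1 - 1/b)) := by
        apply div_le_div₀ hcinv.le hcn (by positivity)
        exact mul_le_mul (by linarith) (by linarith) hDb.le (by linarith)
      refine hle.trans (le_of_eq ?_)
      rw [show (1:ℝ) - b⁻¹ = 1 - 1/b by rw [one_div]]
      rw [div_eq_div_iff (by positivity) hKden'.ne']
      field_simp
    have hat1 : 0 ≤ atil t - 1 := by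
      have h1 : (1:ℝ) ≤ 1/(1 - r t - c⁻¹ * (x t ⬝ᵥ x t)) :=
        one_le_one_div hDa (by linarith)
      rw [hatv]
      linarith
    exact ⟨hat1, by linarith, by linarith⟩
  rcases Nat.eq_zero_or_pos T with hT | hT
  · subst hT
    rw [hA0, smul_smul, one_div, inv_mul_cancel₀ hb0.ne', one_smul]
    simp
  -- S bounds
  have hfin : ((fun t => (y t - u t ⬝ᵥ x t) ^ 2) '' Set.Icc 1 T).Finite :=
    (Set.finite_Icc 1 T).image _
  have hρS : ∀ t ∈ Icc 1 T, (y t - u t ⬝ᵥ x t) ^ 2 ≤ S := by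
    intro t ht
    rw [hS]
    exact le_csSup hfin.bddAbove ⟨t, by simpa [Set.mem_Icc] using mem_Icc.1 ht, rfl⟩
  have hS0 : 0 ≤ S := le_trans (sq_nonneg _) (hρS 1 (mem_Icc.2 ⟨le_refl 1, hT⟩))
  have hbd : (b:ℝ)^d ≠ 0 := by positivity
  have hlogdet : Real.log (((1/b) • A T).det)
      = ∑ t ∈ Icc 1 T, Real.log (1 + a t * r t) := by
    rw [Matrix.det_smul, hdetprod T le_rfl, Fintype.card_fin, one_div, inv_pow,
      inv_mul_cancel_left₀ hbd]
    exact Real.log_prod fun t ht => ((hmain t ht).2.2).ne'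
  calc ∑ t ∈ Icc 1 T, atil t * (y t - u t ⬝ᵥ x t) ^ 2
      = ∑ t ∈ Icc 1 T, ((y t - u t ⬝ᵥ x t) ^ 2 + (atil t - 1) * (y t - u t ⬝ᵥ x t) ^ 2) :=
        Finset.sum_congr rfl fun t _ => by ring
    _ = (∑ t ∈ Icc 1 T, (y t - u t ⬝ᵥ x t) ^ 2)
        + ∑ t ∈ Icc 1 T, (atil t - 1) * (y t - u t ⬝ᵥ x t) ^ 2 := Finset.sum_add_distrib
    _ ≤ (∑ t ∈ Icc 1 T, (y t - u t ⬝ᵥ x t) ^ 2)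
        + ∑ t ∈ Icc 1 T, (b/(b-1) * Real.log (1 + a t * r t)
            + 1/(c * (1 - b⁻¹)^2 - (1 - b⁻¹))) * S := by
      refine add_le_add_right (Finset.sum_le_sum fun t ht => ?_) _
      calc (atil t - 1) * (y t - u t ⬝ᵥ x t) ^ 2
          ≤ (atil t - 1) * S := mul_le_mul_of_nonneg_left (hρS t ht) (hmain t ht).1
        _ ≤ _ := mul_le_mul_of_nonneg_right (hmain t ht).2.1 hS0
    _ = (∑ t ∈ Icc 1 T, (y t - u t ⬝ᵥ x t) ^ 2)
        + (b/(b-1) * S * ∑ t ∈ Icc 1 T, Real.log (1 + a t * r t)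
          + (T:ℝ) * (1/(c * (1 - b⁻¹)^2 - (1 - b⁻¹)) * S)) := by
      congr 1
      have hcard : (Icc 1 T).card = T := by rw [Nat.card_Icc]; omega
      rw [Finset.sum_congr rfl (fun t _ => show (b/(b-1) * Real.log (1 + a t * r t)
            + 1/(c * (1 - b⁻¹)^2 - (1 - b⁻¹))) * S
          = b/(b-1) * S * Real.log (1 + a t * r t)
            + 1/(c * (1 - b⁻¹)^2 - (1 - b⁻¹)) * S from by ring),
        Finset.sum_add_distrib, ← Finset.mul_sum, Finset.sum_const, hcard, nsmul_eq_mul]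
    _ = (∑ t ∈ Icc 1 T, (y t - u t ⬝ᵥ x t) ^ 2)
        + b / (b - 1) * S * Real.log (((1 / b) • A T).det)
        + (T : ℝ) * S / (c * (1 - b⁻¹) ^ 2 - (1 - b⁻¹)) := by
      rw [hlogdet]
      ring
end
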